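/- arXiv:1702.04974 — 3 statements merged into one kernel-verified Lean document; each statement's English description precedes it below -/
import Mathlib

section
/- For every n ≥ 1 and every discrete sequence Λ in the unit disk 𝔻 one has the inclusions X^n(Λ) ⊆ X^{n−1}(Λ) ⊆ ⋯ ⊆ X^0(Λ); in particular, if ω ∈ X^n(Λ) then ω ∈ X^{n−1}(Λ). -/
open Complex Set

noncomputable section

/-- The open unit disk `𝔻` in the complex plane. -/
def unitDisk : Set ℂ := {z : ℂ | ‖z‖ < 1}

/-- The Laplacian of `H : ℂ → ℝ`, as the sum of the second directional
derivatives in the directions `1` and `I`. -/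
def laplacian (H : ℂ → ℝ) (z : ℂ) : ℝ :=
  fderiv ℝ (fun w => fderiv ℝ H w 1) z 1 +
    fderiv ℝ (fun w => fderiv ℝ H w Complex.I) z Complex.I

/-- `H` is harmonic on the unit disk: twice continuously differentiable with
vanishing Laplacian. -/
def HarmonicOnDisk (H : ℂ → ℝ) : Prop :=
  ContDiffOn ℝ 2 H unitDisk ∧ ∀ z ∈ unitDisk, laplacian H z = 0

/-- `H ∈ Har₊(𝔻)`: a non-negative harmonic function on the unit disk. -/
def HarPos (H : ℂ → ℝ) : Prop :=
  HarmonicOnDisk H ∧ ∀ z ∈ unitDisk, 0 ≤ H z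

/-- The pseudohyperbolic distance `ρ(z,w) = |z-w| / |1 - conj z * w|`. -/
def pDist (z w : ℂ) : ℝ := ‖(z - w) / (1 - (starRingEnd ℂ) z * w)‖

/-- The pseudohyperbolic disk `D(z,r) = {w ∈ 𝔻 : ρ(z,w) < r}`. -/
def pDisk (z : ℂ) (r : ℝ) : Set ℂ := {w ∈ unitDisk | pDist z w < r}

/-- The Blaschke factor `b_a(z) = (z - a)/(1 - conj a * z)`. -/
def blaschke (a z : ℂ) : ℂ := (z - a) / (1 - (starRingEnd ℂ) a * z)

/-- A discrete sequence in `𝔻`: a set of (pairwise distinct) points of the unit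
disk with no accumulation point inside the disk. -/
def DiscreteSeq (Λ : Set ℂ) : Prop :=
  Λ ⊆ unitDisk ∧ ∀ z ∈ unitDisk, ¬ AccPt z (Filter.principal Λ)

/-- The Nevanlinna class `N`: holomorphic functions on `𝔻` such that
`log⁺ |f|` admits a majorant in `Har₊(𝔻)`. -/
def Nevanlinna (f : ℂ → ℂ) : Prop :=
  DifferentiableOn ℂ f unitDisk ∧
    ∃ H : ℂ → ℝ, HarPos H ∧ ∀ z ∈ unitDisk, Real.log (max (‖f z‖) 1) ≤ H z

/-- `Λ ∈ Int N`: for every bounded family of values on `Λ` there is a function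
in the Nevanlinna class interpolating it. -/
def IntN (Λ : Set ℂ) : Prop :=
  ∀ v : ℂ → ℂ, (∃ C : ℝ, ∀ lam ∈ Λ, ‖v lam‖ ≤ C) →
    ∃ f : ℂ → ℂ, Nevanlinna f ∧ ∀ lam ∈ Λ, f lam = v lam

/-- Pseudohyperbolic divided differences:
`divDiff j ω z = Δʲω(z 0, …, z j)`. -/
def divDiff : (j : ℕ) → (ℂ → ℂ) → (Fin (j + 1) → ℂ) → ℂ
  | 0, ω, z => ω (z 0)
  | j + 1, ω, z =>
      (divDiff j ω (fun i => z i.succ) - divDiff j ω (fun i => z i.castSucc)) /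
        blaschke (z 0) (z (Fin.last (j + 1)))

/-- `ω ∈ X^m(Λ)`: the divided differences of order `m` (on tuples of `m+1`
pairwise distinct points of `Λ`) are uniformly controlled by a positive
harmonic function. -/
def MemX (m : ℕ) (Λ : Set ℂ) (ω : ℂ → ℂ) : Prop :=
  ∃ H : ℂ → ℝ, HarPos H ∧ ∃ C : ℝ,
    ∀ z : Fin (m + 1) → ℂ, (∀ i, z i ∈ Λ) → Function.Injective z →
      ‖divDiff m ω z‖ * Real.exp (-(∑ i, H (z i))) ≤ C

/-- `Λ` is weakly separated: for some `H ∈ Har₊(𝔻)` the pseudohyperbolic disks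
`D(λ, e^{-H(λ)})`, `λ ∈ Λ`, are pairwise disjoint. -/
def WeaklySep (Λ : Set ℂ) : Prop :=
  ∃ H : ℂ → ℝ, HarPos H ∧ ∀ lam ∈ Λ, ∀ mu ∈ Λ, lam ≠ mu →
    Disjoint (pDisk lam (Real.exp (-H lam))) (pDisk mu (Real.exp (-H mu)))


lemma harPos_zero : HarPos (fun _ => (0:ℝ)) := by
  refine ⟨⟨contDiffOn_const, ?_⟩, fun z _ => le_refl 0⟩
  intro z _
  simp [laplacian, fderiv_const]

lemma one_sub_conj_mul_ne_zero {a z : ℂ} (ha : ‖a‖ < 1) (hz : ‖z‖ < 1) :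
    (1 : ℂ) - (starRingEnd ℂ) a * z ≠ 0 := by
  intro h
  have h1 : (1:ℂ) = (starRingEnd ℂ) a * z := by linear_combination h
  have := congrArg (‖·‖) h1
  simp [map_mul] at this
  nlinarith [norm_nonneg a, norm_nonneg z]

lemma abs_blaschke_le {a z : ℂ} (ha : ‖a‖ < 1) (hz : ‖z‖ < 1) :
    ‖blaschke a z‖ ≤ 1 := by
  have hkey : Complex.normSq (1 - (starRingEnd ℂ) a * z) - Complex.normSq (z - a)
      = (1 - Complex.normSq a) * (1 - Complex.normSq z) := by
    simp only [Complex.normSq_apply, Complex.mul_re, Complex.mul_im, Complex.sub_re,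
      Complex.sub_im, Complex.one_re, Complex.one_im, Complex.conj_re, Complex.conj_im]
    ring
  have hna : Complex.normSq a < 1 := by
    rw [← Complex.sq_norm]; nlinarith [norm_nonneg a]
  have hnz : Complex.normSq z < 1 := by
    rw [← Complex.sq_norm]; nlinarith [norm_nonneg z]
  have h2 : Complex.normSq (z - a) ≤ Complex.normSq (1 - (starRingEnd ℂ) a * z) := by nlinarith
  have h3 : ‖z - a‖ ≤ ‖1 - (starRingEnd ℂ) a * z‖ := by
    rw [Complex.norm_def, Complex.norm_def]
    exact Real.sqrt_le_sqrt h2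
  rw [blaschke, norm_div]
  exact div_le_one_of_le₀ h3 (norm_nonneg _)

lemma blaschke_ne_zero {a z : ℂ} (ha : ‖a‖ < 1) (hz : ‖z‖ < 1)
    (hne : a ≠ z) : blaschke a z ≠ 0 := by
  unfold blaschke
  exact div_ne_zero (sub_ne_zero.mpr (Ne.symm hne)) (one_sub_conj_mul_ne_zero ha hz)

lemma divDiff_step (m : ℕ) (ω : ℂ → ℂ) (z : Fin (m + 2) → ℂ)
    (h0 : ‖z 0‖ < 1) (hl : ‖z (Fin.last (m+1))‖ < 1)
    (hne : z 0 ≠ z (Fin.last (m+1))) :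
    divDiff m ω (fun i => z i.castSucc) =
      divDiff m ω (fun i => z i.succ) - blaschke (z 0) (z (Fin.last (m+1))) * divDiff (m+1) ω z := by
  have hb := blaschke_ne_zero h0 hl hne
  have hd : divDiff (m+1) ω z =
      (divDiff m ω (fun i => z i.succ) - divDiff m ω (fun i => z i.castSucc)) /
        blaschke (z 0) (z (Fin.last (m+1))) := rfl
  rw [hd]
  field_simp
  ring

lemma chain_bound (m : ℕ) (ω : ℂ → ℂ) (c : ℕ → ℂ)
    (hD : ∀ n, n < 2*m+2 → ‖c n‖ < 1)
    (hinj : ∀ n1 n2, n1 < 2*m+2 → n2 < 2*m+2 → c n1 = c n2 → n1 = n2)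
    (B : ℝ) (hB0 : 0 ≤ B)
    (hstep : ∀ k, k ≤ m → ‖divDiff (m+1) ω (fun i : Fin (m+2) => c (k + ↑i))‖ ≤ B) :
    ‖divDiff m ω (fun i : Fin (m+1) => c ↑i)‖ ≤
      ‖divDiff m ω (fun i : Fin (m+1) => c (m+1+↑i))‖ + (m+1 : ℝ) * B := by
  have key : ∀ d k, k + d = m + 1 →
      ‖divDiff m ω (fun i : Fin (m+1) => c (k+↑i))‖ ≤
      ‖divDiff m ω (fun i : Fin (m+1) => c (m+1+↑i))‖ + (d : ℝ) * B := by
    intro d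
    induction d with
    | zero =>
      intro k hk
      obtain rfl : k = m+1 := by omega
      simp
    | succ d ih =>
      intro k hk
      have hk' : k ≤ m := by omega
      have h0 : ‖(fun i : Fin (m+2) => c (k + ↑i)) 0‖ < 1 := by
        simp only [Fin.val_zero]
        exact hD _ (by omega)
      have hl : ‖(fun i : Fin (m+2) => c (k + ↑i)) (Fin.last (m+1))‖ < 1 := by
        simp only [Fin.val_last]
        exact hD _ (by omega)
      have hne : (fun i : Fin (m+2) => c (k + ↑i)) 0 ≠ (fun i : Fin (m+2) => c (k + ↑i)) (Fin.last (m+1)) := by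
        simp only [Fin.val_zero, Fin.val_last]
        intro h
        have := hinj (k + 0) (k + (m+1)) (by omega) (by omega) h
        omega
      have hs := divDiff_step m ω (fun i : Fin (m+2) => c (k + ↑i)) (by exact h0) (by exact hl) (by exact hne)
      have hTc : (fun i : Fin (m+1) => (fun i : Fin (m+2) => c (k + ↑i)) i.castSucc)
          = fun i : Fin (m+1) => c (k + ↑i) := by
        funext i; simp
      have hTs : (fun i : Fin (m+1) => (fun i : Fin (m+2) => c (k + ↑i)) i.succ)
          = fun i : Fin (m+1) => c ((k+1) + ↑i) := by
        funext i
        simp only [Fin.val_succ]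
        congr 1
        omega
      rw [hTc, hTs] at hs
      rw [hs]
      have h2 := ih (k+1) (by omega)
      have h3 := hstep k hk'
      have habs := abs_blaschke_le h0 hl
      set X := divDiff m ω (fun i : Fin (m+1) => c ((k+1) + ↑i)) with hX
      set b := blaschke ((fun i : Fin (m+2) => c (k + ↑i)) 0)
        ((fun i : Fin (m+2) => c (k + ↑i)) (Fin.last (m+1))) with hb
      set D := divDiff (m+1) ω (fun i : Fin (m+2) => c (k + ↑i)) with hDD
      have t1 : ‖X - b * D‖ ≤ ‖X‖ + ‖b * D‖ := by
        exact norm_sub_le X (b * D)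
      have t2 : ‖b * D‖ ≤ B := by
        rw [norm_mul]
        calc ‖b‖ * ‖D‖ ≤ 1 * ‖D‖ :=
              mul_le_mul_of_nonneg_right habs (norm_nonneg _)
          _ = ‖D‖ := one_mul _
          _ ≤ B := h3
      have hcast : ((d + 1 : ℕ) : ℝ) = (d : ℝ) + 1 := by push_cast; ring
      rw [hcast]
      linarith
  have := key (m+1) 0 (by omega)
  simpa using this

lemma memX_succ (m : ℕ) (Λ : Set ℂ) (hΛ : Λ ⊆ unitDisk) (ω : ℂ → ℂ)
    (h : MemX (m+1) Λ ω) : MemX m Λ ω := by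
  classical
  by_cases hfin : Λ.Finite
  · -- finitely many points: take the (finite) sum of all values as constant
    refine ⟨fun _ => 0, harPos_zero, ?_⟩
    refine ⟨∑ f : Fin (m+1) → hfin.toFinset,
      ‖divDiff m ω (fun i => ((f i : ℂ)))‖, ?_⟩
    intro z hz hzinj
    have hz' : ∀ i, z i ∈ hfin.toFinset := fun i => hfin.mem_toFinset.mpr (hz i)
    have hrw : z = fun i => (((fun i => (⟨z i, hz' i⟩ : hfin.toFinset)) i : ℂ)) := by
      funext i; rfl
    have hle : ‖divDiff m ω z‖ ≤
        ∑ f : Fin (m+1) → hfin.toFinset, ‖divDiff m ω (fun i => ((f i : ℂ)))‖ := by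
      rw [hrw]
      exact Finset.single_le_sum
        (f := fun f : Fin (m+1) → hfin.toFinset => ‖divDiff m ω (fun i => ((f i : ℂ)))‖)
        (fun f _ => norm_nonneg _) (Finset.mem_univ _)
    simpa using hle
  · -- infinite case
    have hinf : Λ.Infinite := hfin
    obtain ⟨H, hH, C, hC⟩ := h
    set e := Set.Infinite.natEmbedding Λ hinf with he
    set M : Fin (2*m+2) → ℂ := fun i => ((e i : Λ) : ℂ) with hM
    have hMinj : Function.Injective M := by
      intro i j hij
      have : e (i : ℕ) = e (j : ℕ) := Subtype.ext hij
      exact Fin.ext (e.injective this)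
    have hMΛ : ∀ i, M i ∈ Λ := fun i => (e (i : ℕ)).2
    set KH := ∑ i : Fin (2*m+2), H (M i) with hKH
    have hH0 : ∀ w ∈ Λ, 0 ≤ H w := fun w hw => hH.2 w (hΛ hw)
    have hKH0 : 0 ≤ KH := Finset.sum_nonneg fun i _ => hH0 _ (hMΛ i)
    set maxC := max C 0 with hmaxC
    set C₀ := ∑ τ : Fin (m+1) → Fin (2*m+2),
      ‖divDiff m ω (fun j => M (τ j))‖ with hC₀def
    have hC₀0 : 0 ≤ C₀ := Finset.sum_nonneg fun τ _ => norm_nonneg _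
    refine ⟨H, hH, C₀ + (m+1 : ℝ) * (maxC * Real.exp KH), ?_⟩
    intro lam hlam hlinj
    set Sl := ∑ i, H (lam i) with hSl
    have hSl0 : 0 ≤ Sl := Finset.sum_nonneg fun i _ => hH0 _ (hlam i)
    -- choose m+1 points of M avoiding the range of lam
    set Good : Finset (Fin (2*m+2)) := Finset.univ.filter (fun i => M i ∉ Set.range lam)
      with hGoodDef
    have hGoodcard : m + 1 ≤ Good.card := by
      have hBad : (Finset.univ.filter (fun i => M i ∈ Set.range lam)).card ≤ m + 1 := by
        have h1 : ((Finset.univ.filter (fun i => M i ∈ Set.range lam)).image M).card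
            ≤ (Finset.univ.image lam).card := by
          apply Finset.card_le_card
          intro x hx
          simp only [Finset.mem_image, Finset.mem_filter, Finset.mem_univ, true_and] at hx ⊢
          obtain ⟨i, ⟨j, hj⟩, hMi⟩ := hx
          exact ⟨j, by rw [hj, hMi]⟩
        rw [Finset.card_image_of_injective _ hMinj] at h1
        calc (Finset.univ.filter (fun i => M i ∈ Set.range lam)).card
            ≤ (Finset.univ.image lam).card := h1
          _ ≤ (Finset.univ : Finset (Fin (m+1))).card := Finset.card_image_le
          _ = m + 1 := by simp
      have htot := Finset.card_filter_add_card_filter_not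
        (s := (Finset.univ : Finset (Fin (2*m+2)))) (p := fun i => M i ∈ Set.range lam)
      simp only [Finset.card_univ, Fintype.card_fin] at htot
      have : Good = Finset.univ.filter (fun i => ¬ (M i ∈ Set.range lam)) := rfl
      rw [this]
      omega
    obtain ⟨t, htG, htcard⟩ := Finset.exists_subset_card_eq hGoodcard
    set σ : Fin (m+1) → Fin (2*m+2) := fun j => ((t.orderIsoOfFin htcard j : t) : Fin (2*m+2))
      with hσdef
    have hσinj : Function.Injective σ := by
      intro a b hab
      exact (t.orderIsoOfFin htcard).injective (Subtype.ext hab)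
    have hσGood : ∀ j, M (σ j) ∉ Set.range lam := by
      intro j
      have h1 : σ j ∈ t := (t.orderIsoOfFin htcard j).2
      have h2 : σ j ∈ Good := htG h1
      rw [hGoodDef, Finset.mem_filter] at h2
      exact h2.2
    set μ : Fin (m+1) → ℂ := fun j => M (σ j) with hμdef
    have hμinj : Function.Injective μ := hMinj.comp hσinj
    -- the combined sequence
    set c : ℕ → ℂ := fun n => if h : n < m + 1 then lam ⟨n, h⟩
      else if h2 : n - (m+1) < m + 1 then μ ⟨n - (m+1), h2⟩ else 0 with hcdef
    have hc_lt : ∀ n (hn : n < m+1), c n = lam ⟨n, hn⟩ := fun n hn => dif_pos hn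
    have hc_ge : ∀ n (h1 : m+1 ≤ n) (h2 : n - (m+1) < m+1), c n = μ ⟨n - (m+1), h2⟩ := by
      intro n h1 h2
      rw [hcdef]
      simp only
      rw [dif_neg (by omega), dif_pos h2]
    have hcΛ : ∀ n, n < 2*m+2 → c n ∈ Λ := by
      intro n hn
      by_cases hcase : n < m+1
      · rw [hc_lt n hcase]; exact hlam _
      · rw [hc_ge n (by omega) (by omega)]; exact hMΛ _
    have hcD : ∀ n, n < 2*m+2 → ‖c n‖ < 1 := fun n hn => hΛ (hcΛ n hn)
    have hc_inj : ∀ n1 n2, n1 < 2*m+2 → n2 < 2*m+2 → c n1 = c n2 → n1 = n2 := by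
      intro n1 n2 h1 h2 heq
      by_cases k1 : n1 < m+1 <;> by_cases k2 : n2 < m+1
      · rw [hc_lt n1 k1, hc_lt n2 k2] at heq
        have := hlinj heq
        exact congrArg Fin.val this
      · rw [hc_lt n1 k1, hc_ge n2 (by omega) (by omega)] at heq
        exact absurd ⟨_, heq⟩ (hσGood _)
      · rw [hc_ge n1 (by omega) (by omega), hc_lt n2 k2] at heq
        exact absurd ⟨_, heq.symm⟩ (hσGood _)
      · rw [hc_ge n1 (by omega) (by omega), hc_ge n2 (by omega) (by omega)] at heq
        have := hμinj heq
        have := congrArg Fin.val this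
        simp only at this
        omega
    -- bound the sums of H over windows
    have hsumS : ∀ k, k ≤ m → (∑ i : Fin (m+2), H (c (k + ↑i))) ≤ Sl + KH := by
      intro k hk
      have e1 : (∑ i : Fin (m+2), H (c (k + ↑i)))
          = ∑ n ∈ Finset.range (m+2), H (c (k + n)) :=
        Fin.sum_univ_eq_sum_range (fun n => H (c (k + n))) (m+2)
      have e2 : ∑ n ∈ Finset.range (m+2), H (c (k + n))
          = ∑ n ∈ Finset.Ico k (k + (m+2)), H (c n) := by
        rw [Finset.sum_Ico_eq_sum_range]
        simp
      have e3 : ∑ n ∈ Finset.Ico k (k + (m+2)), H (c n)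
          ≤ ∑ n ∈ Finset.range (2*m+2), H (c n) := by
        apply Finset.sum_le_sum_of_subset_of_nonneg
        · intro x hx
          rw [Finset.mem_Ico] at hx
          rw [Finset.mem_range]
          omega
        · intro n hn _
          exact hH0 _ (hcΛ n (Finset.mem_range.mp hn))
      have e4 : ∑ n ∈ Finset.range (2*m+2), H (c n)
          = (∑ n ∈ Finset.range (m+1), H (c n)) + ∑ n ∈ Finset.Ico (m+1) (2*m+2), H (c n) := by
        rw [Finset.range_eq_Ico, Finset.range_eq_Ico]
        exact (Finset.sum_Ico_consecutive (fun n => H (c n)) (by omega : 0 ≤ m+1) (by omega : m+1 ≤ 2*m+2)).symm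
      have e5 : ∑ n ∈ Finset.range (m+1), H (c n) = Sl := by
        rw [hSl, ← Fin.sum_univ_eq_sum_range (fun n => H (c n)) (m+1)]
        apply Finset.sum_congr rfl
        intro i _
        rw [hc_lt _ i.isLt, Fin.eta]
      have e6 : ∑ n ∈ Finset.Ico (m+1) (2*m+2), H (c n) ≤ KH := by
        rw [Finset.sum_Ico_eq_sum_range]
        have e7 : ∑ n ∈ Finset.range (2*m+2 - (m+1)), H (c (m+1+n))
            = ∑ j : Fin (m+1), H (μ j) := by
          have h9 : 2*m+2 - (m+1) = m+1 := by omega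
          rw [h9, ← Fin.sum_univ_eq_sum_range (fun n => H (c (m+1+n))) (m+1)]
          apply Finset.sum_congr rfl
          intro j _
          rw [hc_ge _ (by omega) (by omega)]
          exact congrArg (fun x => H (μ x)) (Fin.ext (by simp))
        rw [e7]
        have e8 : ∑ j : Fin (m+1), H (μ j)
            = ∑ i ∈ Finset.univ.image σ, H (M i) := by
          rw [Finset.sum_image (fun a _ b _ hab => hσinj hab)]
        rw [e8, hKH]
        apply Finset.sum_le_sum_of_subset_of_nonneg (Finset.subset_univ _)
        intro i _ _
        exact hH0 _ (hMΛ i)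
      linarith
    -- the per-step bound
    set B := maxC * Real.exp (Sl + KH) with hBdef
    have hB0 : 0 ≤ B := mul_nonneg (le_max_right C 0) (Real.exp_pos _).le
    have hstep : ∀ k, k ≤ m →
        ‖divDiff (m+1) ω (fun i : Fin (m+2) => c (k + ↑i))‖ ≤ B := by
      intro k hk
      have hmem : ∀ i : Fin (m+2), c (k + ↑i) ∈ Λ := by
        intro i
        exact hcΛ _ (by have := i.isLt; omega)
      have hinj2 : Function.Injective (fun i : Fin (m+2) => c (k + ↑i)) := by
        intro i1 i2 h12
        have := hc_inj (k + ↑i1) (k + ↑i2)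
          (by have := i1.isLt; omega) (by have := i2.isLt; omega) h12
        exact Fin.ext (by omega)
      have h1 := hC (fun i : Fin (m+2) => c (k + ↑i)) hmem hinj2
      set s := ∑ i : Fin (m+2), H (c (k + ↑i)) with hs
      have h2 : ‖divDiff (m+1) ω (fun i : Fin (m+2) => c (k + ↑i))‖
          ≤ C * Real.exp s := by
        have h3 := mul_le_mul_of_nonneg_right h1 (Real.exp_pos s).le
        rwa [mul_assoc, ← Real.exp_add, neg_add_cancel, Real.exp_zero, mul_one] at h3
      calc ‖divDiff (m+1) ω (fun i : Fin (m+2) => c (k + ↑i))‖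
          ≤ C * Real.exp s := h2
        _ ≤ maxC * Real.exp s :=
            mul_le_mul_of_nonneg_right (le_max_left C 0) (Real.exp_pos _).le
        _ ≤ maxC * Real.exp (Sl + KH) := by
            apply mul_le_mul_of_nonneg_left _ (le_max_right C 0)
            exact Real.exp_le_exp.mpr (hsumS k hk)
        _ = B := rfl
    -- the chain
    have hchain := chain_bound m ω c hcD hc_inj B hB0 hstep
    have hc0 : (fun i : Fin (m+1) => c ↑i) = lam := by
      funext i
      rw [hc_lt _ i.isLt, Fin.eta]
    have hclast : (fun i : Fin (m+1) => c (m+1+↑i)) = μ := by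
      funext j
      rw [hc_ge _ (by omega) (by omega)]
      exact congrArg μ (Fin.ext (by simp))
    rw [hc0, hclast] at hchain
    have hterm : ‖divDiff m ω μ‖ ≤ C₀ := by
      rw [hC₀def, hμdef]
      exact Finset.single_le_sum
        (f := fun τ : Fin (m+1) → Fin (2*m+2) => ‖divDiff m ω (fun j => M (τ j))‖)
        (fun τ _ => norm_nonneg _) (Finset.mem_univ σ)
    -- conclude
    have hexp1 : Real.exp (-Sl) ≤ 1 := Real.exp_le_one_iff.mpr (by linarith)
    have hexp2 : Real.exp (Sl + KH) * Real.exp (-Sl) = Real.exp KH := by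
      rw [← Real.exp_add]
      congr 1
      ring
    have hfinal : ‖divDiff m ω lam‖ * Real.exp (-Sl)
        ≤ C₀ + (m+1 : ℝ) * (maxC * Real.exp KH) := by
      have h1 : ‖divDiff m ω lam‖ ≤ C₀ + (m+1 : ℝ) * B := by linarith
      have h2 := mul_le_mul_of_nonneg_right h1 (Real.exp_pos (-Sl)).le
      have h3 : (C₀ + (m+1 : ℝ) * B) * Real.exp (-Sl)
          = C₀ * Real.exp (-Sl) + (m+1 : ℝ) * (maxC * (Real.exp (Sl + KH) * Real.exp (-Sl))) := by
        rw [hBdef]; ring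
      rw [h3, hexp2] at h2
      have h4 : C₀ * Real.exp (-Sl) ≤ C₀ :=
        mul_le_of_le_one_right hC₀0 hexp1
      linarith
    exact hfinal

/-- **Lemma 1.** `X^n(Λ) ⊆ X^{n-1}(Λ) ⊆ ⋯ ⊆ X^0(Λ)`; in particular
`ω ∈ X^n(Λ)` implies `ω ∈ X^{n-1}(Λ)`. -/
theorem X_chain_inclusions
    (n : ℕ) (hn : 1 ≤ n) (Λ : Set ℂ) (hΛ : DiscreteSeq Λ) (ω : ℂ → ℂ) :
    (∀ m : ℕ, 1 ≤ m → m ≤ n → MemX m Λ ω → MemX (m - 1) Λ ω) ∧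
      (MemX n Λ ω → MemX (n - 1) Λ ω) := by
  have key : ∀ m : ℕ, 1 ≤ m → MemX m Λ ω → MemX (m - 1) Λ ω := by
    intro m hm hmem
    obtain ⟨m', rfl⟩ : ∃ m', m = m' + 1 := ⟨m - 1, by omega⟩
    simpa using memX_succ m' Λ hΛ.1 ω hmem
  exact ⟨fun m hm _ => key m hm, key n hn⟩
end
end

section
/- Let n ≥ 1 and let Λ be a discrete sequence in the unit disk 𝔻 that is the union of n weakly separated sequences. Then there exists H ∈ Har₊(𝔻) such that for every λ ∈ Λ the pseudohyperbolic disk D(λ, e^{−H(λ)}) contains at most n points of Λ. -/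
open Complex Set

noncomputable section

section Aux

lemma isOpen_unitDisk : IsOpen unitDisk :=
  isOpen_lt continuous_norm continuous_const

namespace CBAux

variable {H H₁ H₂ : ℂ → ℝ}

lemma diffAt (hH : ContDiffOn ℝ 2 H unitDisk) {z : ℂ} (hz : z ∈ unitDisk) :
    DifferentiableAt ℝ H z :=
  ((hH.differentiableOn (by norm_num)) z hz).differentiableAt (isOpen_unitDisk.mem_nhds hz)

lemma fderiv_diffAt (hH : ContDiffOn ℝ 2 H unitDisk) {z : ℂ} (hz : z ∈ unitDisk) :
    DifferentiableAt ℝ (fderiv ℝ H) z :=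
  (((hH.fderiv_of_isOpen (m := 1) isOpen_unitDisk (by norm_num)).differentiableOn (by norm_num)) z
    hz).differentiableAt (isOpen_unitDisk.mem_nhds hz)

lemma hasFDerivAt_fderiv_apply (hH : ContDiffOn ℝ 2 H unitDisk) {z : ℂ} (hz : z ∈ unitDisk)
    (v : ℂ) :
    HasFDerivAt (fun w => fderiv ℝ H w v)
      ((ContinuousLinearMap.apply ℝ ℝ v).comp (fderiv ℝ (fderiv ℝ H) z)) z :=
  (ContinuousLinearMap.apply ℝ ℝ v).hasFDerivAt.comp z (fderiv_diffAt hH hz).hasFDerivAt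

lemma laplacian_eq (hH : ContDiffOn ℝ 2 H unitDisk) {z : ℂ} (hz : z ∈ unitDisk) :
    laplacian H z = fderiv ℝ (fderiv ℝ H) z 1 1 + fderiv ℝ (fderiv ℝ H) z Complex.I Complex.I := by
  rw [laplacian, (hasFDerivAt_fderiv_apply hH hz 1).fderiv,
    (hasFDerivAt_fderiv_apply hH hz Complex.I).fderiv]
  rfl

lemma second_symm (hH : ContDiffOn ℝ 2 H unitDisk) {z : ℂ} (hz : z ∈ unitDisk) (v w : ℂ) :
    fderiv ℝ (fderiv ℝ H) z v w = fderiv ℝ (fderiv ℝ H) z w v := by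
  have hev : ∀ᶠ y in nhds z, HasFDerivAt H (fderiv ℝ H y) y := by
    filter_upwards [isOpen_unitDisk.mem_nhds hz] with y hy
    exact (diffAt hH hy).hasFDerivAt
  exact second_derivative_symmetric_of_eventually hev (fderiv_diffAt hH hz).hasFDerivAt v w

lemma laplacian_add (h₁ : ContDiffOn ℝ 2 H₁ unitDisk) (h₂ : ContDiffOn ℝ 2 H₂ unitDisk)
    {z : ℂ} (hz : z ∈ unitDisk) :
    laplacian (fun w => H₁ w + H₂ w) z = laplacian H₁ z + laplacian H₂ z := by
  have key : ∀ v : ℂ, fderiv ℝ (fun w => fderiv ℝ (fun x => H₁ x + H₂ x) w v) z v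
      = fderiv ℝ (fun w => fderiv ℝ H₁ w v) z v + fderiv ℝ (fun w => fderiv ℝ H₂ w v) z v := by
    intro v
    have he : (fun w => fderiv ℝ (fun x => H₁ x + H₂ x) w v)
        =ᶠ[nhds z] fun w => fderiv ℝ H₁ w v + fderiv ℝ H₂ w v := by
      filter_upwards [isOpen_unitDisk.mem_nhds hz] with y hy
      rw [fderiv_fun_add (diffAt h₁ hy) (diffAt h₂ hy)]
      rfl
    rw [he.fderiv_eq, fderiv_fun_add (hasFDerivAt_fderiv_apply h₁ hz v).differentiableAt
      (hasFDerivAt_fderiv_apply h₂ hz v).differentiableAt]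
    rfl
  simp only [laplacian]
  rw [key 1, key Complex.I]
  ring

lemma laplacian_const (c : ℝ) (z : ℂ) : laplacian (fun _ => c) z = 0 := by
  simp [laplacian, fderiv_const]

lemma laplacian_const_mul (h₁ : ContDiffOn ℝ 2 H₁ unitDisk) (c : ℝ)
    {z : ℂ} (hz : z ∈ unitDisk) :
    laplacian (fun w => c * H₁ w) z = c * laplacian H₁ z := by
  have key : ∀ v : ℂ, fderiv ℝ (fun w => fderiv ℝ (fun x => c * H₁ x) w v) z v
      = c * fderiv ℝ (fun w => fderiv ℝ H₁ w v) z v := by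
    intro v
    have he : (fun w => fderiv ℝ (fun x => c * H₁ x) w v)
        =ᶠ[nhds z] fun w => c * fderiv ℝ H₁ w v := by
      filter_upwards [isOpen_unitDisk.mem_nhds hz] with y hy
      rw [fderiv_const_mul (diffAt h₁ hy)]
      rfl
    rw [he.fderiv_eq, fderiv_const_mul (hasFDerivAt_fderiv_apply h₁ hz v).differentiableAt]
    rfl
  simp only [laplacian]
  rw [key 1, key Complex.I]
  ring

lemma harPos_add (h₁ : HarPos H₁) (h₂ : HarPos H₂) : HarPos (fun z => H₁ z + H₂ z) := by
  refine ⟨⟨h₁.1.1.add h₂.1.1, fun z hz => ?_⟩, fun z hz => add_nonneg (h₁.2 z hz) (h₂.2 z hz)⟩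
  rw [laplacian_add h₁.1.1 h₂.1.1 hz, h₁.1.2 z hz, h₂.1.2 z hz, add_zero]

lemma harPos_const (c : ℝ) (hc : 0 ≤ c) : HarPos (fun _ => c) :=
  ⟨⟨contDiffOn_const, fun z _ => laplacian_const c z⟩, fun _ _ => hc⟩

lemma harPos_const_mul (h₁ : HarPos H₁) {c : ℝ} (hc : 0 ≤ c) : HarPos (fun z => c * H₁ z) := by
  refine ⟨⟨h₁.1.1.const_smul c, fun z hz => ?_⟩, fun z hz => mul_nonneg hc (h₁.2 z hz)⟩
  rw [laplacian_const_mul h₁.1.1 c hz, h₁.1.2 z hz, mul_zero]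

lemma harPos_sum {ι : Type*} (s : Finset ι) (f : ι → ℂ → ℝ) (hf : ∀ i ∈ s, HarPos (f i)) :
    HarPos (fun z => ∑ i ∈ s, f i z) := by
  induction s using Finset.cons_induction with
  | empty => simpa using harPos_const 0 le_rfl
  | cons a s ha ih =>
    simp only [Finset.sum_cons]
    exact harPos_add (hf a (Finset.mem_cons_self a s)) (ih fun i hi => hf i (Finset.mem_cons_of_mem hi))

end CBAux
end Aux
namespace CBAux

variable {H : ℂ → ℝ}

/-- The complex gradient `∂H/∂x - i ∂H/∂y`. -/
def grad (H : ℂ → ℝ) (z : ℂ) : ℂ :=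
  (fderiv ℝ H z 1 : ℂ) - Complex.I * (fderiv ℝ H z Complex.I : ℂ)

lemma clm_ext {E : Type*} [NormedAddCommGroup E] [NormedSpace ℝ E] {T S : ℂ →L[ℝ] E}
    (h1 : T 1 = S 1) (hI : T Complex.I = S Complex.I) : T = S := by
  ext z
  have hz : z = (z.re : ℝ) • (1 : ℂ) + (z.im : ℝ) • Complex.I := by
    simp [Complex.real_smul, Complex.re_add_im]
  rw [hz, map_add, map_add, map_smul, map_smul, map_smul, map_smul, h1, hI]

lemma grad_hasDerivAt (hH : ContDiffOn ℝ 2 H unitDisk)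
    (hlap : ∀ z ∈ unitDisk, laplacian H z = 0) {z : ℂ} (hz : z ∈ unitDisk) :
    ∃ d : ℂ, HasDerivAt (grad H) d z := by
  set D := fderiv ℝ (fderiv ℝ H) z with hD
  have h1 : HasFDerivAt (fun w => ((fderiv ℝ H w 1 : ℝ) : ℂ))
      (Complex.ofRealCLM.comp ((ContinuousLinearMap.apply ℝ ℝ 1).comp D)) z :=
    Complex.ofRealCLM.hasFDerivAt.comp z (hasFDerivAt_fderiv_apply hH hz 1)
  have h2 : HasFDerivAt (fun w => Complex.I * ((fderiv ℝ H w Complex.I : ℝ) : ℂ))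
      (((ContinuousLinearMap.mul ℂ ℂ Complex.I).restrictScalars ℝ).comp
        (Complex.ofRealCLM.comp ((ContinuousLinearMap.apply ℝ ℝ Complex.I).comp D))) z :=
    (((ContinuousLinearMap.mul ℂ ℂ Complex.I).restrictScalars ℝ).hasFDerivAt).comp z
      (Complex.ofRealCLM.hasFDerivAt.comp z (hasFDerivAt_fderiv_apply hH hz Complex.I))
  have hL : HasFDerivAt (grad H)
      ((Complex.ofRealCLM.comp ((ContinuousLinearMap.apply ℝ ℝ 1).comp D)) -
        (((ContinuousLinearMap.mul ℂ ℂ Complex.I).restrictScalars ℝ).comp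
          (Complex.ofRealCLM.comp ((ContinuousLinearMap.apply ℝ ℝ Complex.I).comp D)))) z :=
    h1.sub h2
  set L := (Complex.ofRealCLM.comp ((ContinuousLinearMap.apply ℝ ℝ 1).comp D)) -
      (((ContinuousLinearMap.mul ℂ ℂ Complex.I).restrictScalars ℝ).comp
        (Complex.ofRealCLM.comp ((ContinuousLinearMap.apply ℝ ℝ Complex.I).comp D))) with hLdef
  have hL1 : L 1 = ((D 1 1 : ℝ) : ℂ) - Complex.I * ((D 1 Complex.I : ℝ) : ℂ) := by
    simp [hLdef]
  have hLI : L Complex.I = ((D Complex.I 1 : ℝ) : ℂ) -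
      Complex.I * ((D Complex.I Complex.I : ℝ) : ℂ) := by
    simp [hLdef]
  have hsym : D Complex.I 1 = D 1 Complex.I := second_symm hH hz Complex.I 1
  have hlap' : D 1 1 + D Complex.I Complex.I = 0 := by
    rw [← laplacian_eq hH hz]; exact hlap z hz
  have hCR : L Complex.I = Complex.I * L 1 := by
    rw [hL1, hLI, hsym]
    have : D Complex.I Complex.I = -(D 1 1) := by linarith
    rw [this]
    push_cast
    ring_nf
    rw [Complex.I_sq]
    ring
  refine ⟨L 1, ?_⟩
  have heq : (ContinuousLinearMap.smulRight (1 : ℂ →L[ℂ] ℂ) (L 1)).restrictScalars ℝ = L := by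
    apply clm_ext
    · simp
    · simp [hCR, mul_comm]
  have h3 : HasFDerivAt (grad H) (ContinuousLinearMap.smulRight (1 : ℂ →L[ℂ] ℂ) (L 1)) z :=
    hasFDerivAt_of_restrictScalars (𝕜 := ℝ) hL heq
  simpa using h3.hasDerivAt

end CBAux
namespace CBAux

lemma abs_sub_le_of_uIcc {a b x : ℝ} (h : x ∈ Set.uIcc a b) : |x - a| ≤ |b - a| := by
  rcases Set.mem_uIcc.1 h with ⟨h1, h2⟩ | ⟨h1, h2⟩ <;>
    · rw [abs_le]
      constructor <;> cases abs_cases (b - a) <;> linarith [le_abs_self (b - a), neg_abs_le (b - a)]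

lemma mem_ball_aux {c z₀ : ℂ} {R δ x y : ℝ} (hz₀ : dist z₀ c < R)
    (hδ : 4 * δ ≤ R - dist z₀ c) (hδ0 : 0 ≤ δ)
    (hx : |x - c.re| ≤ |z₀.re - c.re| + 2 * δ)
    (hy : |y - c.im| ≤ |z₀.im - c.im| + 2 * δ) :
    ((x : ℂ) + (y : ℂ) * Complex.I) ∈ Metric.ball c R := by
  set d := dist z₀ c with hd
  have hd0 : (0:ℝ) ≤ d := dist_nonneg
  have hdsq : d ^ 2 = (z₀.re - c.re) ^ 2 + (z₀.im - c.im) ^ 2 := by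
    rw [hd, Complex.dist_eq, Complex.sq_norm, Complex.normSq_apply, Complex.sub_re,
      Complex.sub_im]
    ring
  have hA : |z₀.re - c.re| ≤ d := by
    rw [hd, Complex.dist_eq, ← Complex.sub_re]; exact Complex.abs_re_le_norm _
  have hB : |z₀.im - c.im| ≤ d := by
    rw [hd, Complex.dist_eq, ← Complex.sub_im]; exact Complex.abs_im_le_norm _
  have h1 : (x - c.re) ^ 2 ≤ (|z₀.re - c.re| + 2 * δ) ^ 2 := by
    rw [← _root_.sq_abs (x - c.re)]
    exact pow_le_pow_left₀ (abs_nonneg _) hx 2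
  have h2 : (y - c.im) ^ 2 ≤ (|z₀.im - c.im| + 2 * δ) ^ 2 := by
    rw [← _root_.sq_abs (y - c.im)]
    exact pow_le_pow_left₀ (abs_nonneg _) hy 2
  have hAsq : |z₀.re - c.re| ^ 2 = (z₀.re - c.re) ^ 2 := _root_.sq_abs _
  have hBsq : |z₀.im - c.im| ^ 2 = (z₀.im - c.im) ^ 2 := _root_.sq_abs _
  have hRd : 0 < R - d := by linarith
  have key : (x - c.re) ^ 2 + (y - c.im) ^ 2 < R ^ 2 := by
    nlinarith [h1, h2, hdsq, hA, hB, abs_nonneg (z₀.re - c.re), abs_nonneg (z₀.im - c.im),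
      mul_pos hRd hRd, mul_nonneg hδ0 hδ0, sq_nonneg (R - d - 4 * δ),
      mul_nonneg hδ0 (sub_nonneg.2 hA), mul_nonneg hδ0 (sub_nonneg.2 hB),
      mul_nonneg hδ0 hd0, mul_nonneg (mul_nonneg hδ0 hδ0) hd0]
  have habs : ‖(x : ℂ) + (y : ℂ) * Complex.I - c‖ ^ 2
      = (x - c.re) ^ 2 + (y - c.im) ^ 2 := by
    rw [Complex.sq_norm, Complex.normSq_apply]
    simp
    ring
  rw [Metric.mem_ball, Complex.dist_eq]
  nlinarith [habs, key, norm_nonneg ((x : ℂ) + (y : ℂ) * Complex.I - c), hd0, hz₀]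

end CBAux
namespace CBAux

open intervalIntegral in
lemma exists_primitive {g : ℂ → ℂ} {c : ℂ} {R : ℝ} (hR : 0 < R)
    (hg : DifferentiableOn ℂ g (Metric.ball c R)) :
    ∃ F : ℂ → ℂ, ∀ z ∈ Metric.ball c R, HasDerivAt F (g z) z := by
  have hgc : ContinuousOn g (Metric.ball c R) := hg.continuousOn
  have hre1 : ∀ a b : ℝ, ((a : ℂ) + (b : ℂ) * Complex.I).re = a := by intro a b; simp
  have him1 : ∀ a b : ℝ, ((a : ℂ) + (b : ℂ) * Complex.I).im = b := by intro a b; simp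
  have horiz : ∀ (a b t : ℝ),
      (∀ x ∈ Set.uIcc a b, ((x : ℂ) + (t : ℂ) * Complex.I) ∈ Metric.ball c R) →
      IntervalIntegrable (fun x : ℝ => g ((x : ℂ) + (t : ℂ) * Complex.I))
        MeasureTheory.volume a b := by
    intro a b t hsub
    apply ContinuousOn.intervalIntegrable
    exact hgc.comp ((Complex.continuous_ofReal.add continuous_const).continuousOn) hsub
  have vert : ∀ (a b t : ℝ),
      (∀ y ∈ Set.uIcc a b, ((t : ℂ) + (y : ℂ) * Complex.I) ∈ Metric.ball c R) →
      IntervalIntegrable (fun y : ℝ => g ((t : ℂ) + (y : ℂ) * Complex.I))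
        MeasureTheory.volume a b := by
    intro a b t hsub
    apply ContinuousOn.intervalIntegrable
    exact hgc.comp ((continuous_const.add
      (Complex.continuous_ofReal.mul continuous_const)).continuousOn) hsub
  refine ⟨fun z => (∫ x : ℝ in c.re..z.re, g ((x : ℂ) + (c.im : ℂ) * Complex.I)) +
      Complex.I * ∫ y : ℝ in c.im..z.im, g ((z.re : ℂ) + (y : ℂ) * Complex.I), ?_⟩
  intro z₀ hz₀
  rw [hasDerivAt_iff_isLittleO, Asymptotics.isLittleO_iff]
  intro ε hε
  have hz₀' : dist z₀ c < R := Metric.mem_ball.1 hz₀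
  have hcont : ContinuousAt g z₀ :=
    ((hg z₀ hz₀).differentiableAt (Metric.isOpen_ball.mem_nhds hz₀)).continuousAt
  obtain ⟨δ₁, hδ₁, hδ₁'⟩ := Metric.continuousAt_iff.1 hcont (ε / 2) (by positivity)
  set δ := min ((R - dist z₀ c) / 4) (δ₁ / 2) with hδdef
  have hδpos : 0 < δ := by
    apply lt_min <;> [linarith; linarith]
  have hδR : 4 * δ ≤ R - dist z₀ c := by
    have := min_le_left ((R - dist z₀ c) / 4) (δ₁ / 2); linarith
  have hδ1 : 2 * δ ≤ δ₁ := by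
    have := min_le_right ((R - dist z₀ c) / 4) (δ₁ / 2); linarith
  filter_upwards [Metric.ball_mem_nhds z₀ hδpos] with z hzball
  have hdz : dist z z₀ < δ := Metric.mem_ball.1 hzball
  have hdz0 : (0:ℝ) ≤ dist z z₀ := dist_nonneg
  have hzre : |z.re - z₀.re| ≤ dist z z₀ := by
    rw [Complex.dist_eq, ← Complex.sub_re]; exact Complex.abs_re_le_norm _
  have hzim : |z.im - z₀.im| ≤ dist z z₀ := by
    rw [Complex.dist_eq, ← Complex.sub_im]; exact Complex.abs_im_le_norm _
  -- memberships
  have hM1 : ∀ x ∈ Set.uIcc c.re z₀.re,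
      ((x : ℂ) + (c.im : ℂ) * Complex.I) ∈ Metric.ball c R := by
    intro x hx
    refine mem_ball_aux hz₀' hδR hδpos.le ?_ ?_
    · have h := abs_sub_le_of_uIcc hx; linarith [hδpos.le]
    · simp only [sub_self, abs_zero]; positivity
  have hM2 : ∀ y ∈ Set.uIcc c.im z₀.im,
      ((z₀.re : ℂ) + (y : ℂ) * Complex.I) ∈ Metric.ball c R := by
    intro y hy
    refine mem_ball_aux hz₀' hδR hδpos.le ?_ ?_
    · linarith [abs_nonneg (z₀.re - c.re), hδpos.le]
    · have h := abs_sub_le_of_uIcc hy; linarith [hδpos.le]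
  have hxgen : ∀ x ∈ Set.uIcc z₀.re z.re, |x - c.re| ≤ |z₀.re - c.re| + 2 * δ := by
    intro x hx
    have h1 := abs_sub_le_of_uIcc hx
    have h2 := abs_sub_le x z₀.re c.re
    linarith [hzre, hdz]
  have hM3 : ∀ x ∈ Set.uIcc z₀.re z.re,
      ((x : ℂ) + (c.im : ℂ) * Complex.I) ∈ Metric.ball c R := by
    intro x hx
    refine mem_ball_aux hz₀' hδR hδpos.le (hxgen x hx) ?_
    simp only [sub_self, abs_zero]; positivity
  have hM3' : ∀ x ∈ Set.uIcc z₀.re z.re,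
      ((x : ℂ) + (z₀.im : ℂ) * Complex.I) ∈ Metric.ball c R := by
    intro x hx
    refine mem_ball_aux hz₀' hδR hδpos.le (hxgen x hx) ?_
    linarith [abs_nonneg (z₀.im - c.im), hδpos.le]
  have hzrecre : |z.re - c.re| ≤ |z₀.re - c.re| + 2 * δ := by
    have h2 := abs_sub_le z.re z₀.re c.re
    linarith [hzre, hdz]
  have hM4 : ∀ y ∈ Set.uIcc c.im z₀.im,
      ((z.re : ℂ) + (y : ℂ) * Complex.I) ∈ Metric.ball c R := by
    intro y hy
    refine mem_ball_aux hz₀' hδR hδpos.le hzrecre ?_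
    have h := abs_sub_le_of_uIcc hy; linarith [hδpos.le]
  have hM5 : ∀ y ∈ Set.uIcc z₀.im z.im,
      ((z.re : ℂ) + (y : ℂ) * Complex.I) ∈ Metric.ball c R := by
    intro y hy
    refine mem_ball_aux hz₀' hδR hδpos.le hzrecre ?_
    have h1 := abs_sub_le_of_uIcc hy
    have h2 := abs_sub_le y z₀.im c.im
    linarith [hzim, hdz]
  -- integrabilities
  have ia1 := horiz c.re z₀.re c.im hM1
  have ia2 := horiz z₀.re z.re c.im hM3
  have ia2' := horiz z₀.re z.re z₀.im hM3'
  have ib1 := vert c.im z₀.im z.re hM4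
  have ib2 := vert z₀.im z.im z.re hM5
  -- splits
  have hsplit1 := intervalIntegral.integral_add_adjacent_intervals ia1 ia2
  have hsplit2 := intervalIntegral.integral_add_adjacent_intervals ib1 ib2
  -- rectangle
  have hrectdiff : DifferentiableOn ℂ g (Set.uIcc z₀.re z.re ×ℂ Set.uIcc c.im z₀.im) := by
    refine hg.mono ?_
    intro p hp
    obtain ⟨h1, h2⟩ := Complex.mem_reProdIm.1 hp
    rw [← Complex.re_add_im p]
    refine mem_ball_aux hz₀' hδR hδpos.le (hxgen p.re h1) ?_
    have h := abs_sub_le_of_uIcc h2; linarith [hδpos.le]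
  have rect := Complex.integral_boundary_rect_eq_zero_of_differentiableOn g
    ((z₀.re : ℂ) + (c.im : ℂ) * Complex.I) ((z.re : ℂ) + (z₀.im : ℂ) * Complex.I)
    (by simp only [hre1, him1]; exact hrectdiff)
  simp only [hre1, him1, smul_eq_mul] at rect
  -- key identity
  have hdecomp : (z : ℂ) - z₀ = ((z.re - z₀.re : ℝ) : ℂ) + ((z.im - z₀.im : ℝ) : ℂ) * Complex.I := by
    apply Complex.ext <;> simp
  simp only [smul_eq_mul]
  have key : ((∫ x : ℝ in c.re..z.re, g ((x : ℂ) + (c.im : ℂ) * Complex.I)) +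
        Complex.I * ∫ y : ℝ in c.im..z.im, g ((z.re : ℂ) + (y : ℂ) * Complex.I)) -
      ((∫ x : ℝ in c.re..z₀.re, g ((x : ℂ) + (c.im : ℂ) * Complex.I)) +
        Complex.I * ∫ y : ℝ in c.im..z₀.im, g ((z₀.re : ℂ) + (y : ℂ) * Complex.I)) -
      (z - z₀) * g z₀ =
      ((∫ x : ℝ in z₀.re..z.re, g ((x : ℂ) + (z₀.im : ℂ) * Complex.I)) -
          ((z.re - z₀.re : ℝ) : ℂ) * g z₀) +
        Complex.I * ((∫ y : ℝ in z₀.im..z.im, g ((z.re : ℂ) + (y : ℂ) * Complex.I)) -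
          ((z.im - z₀.im : ℝ) : ℂ) * g z₀) := by
    rw [← hsplit1, ← hsplit2, hdecomp]
    linear_combination rect
  rw [key]
  -- estimates
  have e1 : (∫ x : ℝ in z₀.re..z.re, g ((x : ℂ) + (z₀.im : ℂ) * Complex.I)) -
      ((z.re - z₀.re : ℝ) : ℂ) * g z₀ =
      ∫ x : ℝ in z₀.re..z.re, (g ((x : ℂ) + (z₀.im : ℂ) * Complex.I) - g z₀) := by
    rw [intervalIntegral.integral_sub ia2' intervalIntegrable_const,
      intervalIntegral.integral_const, Complex.real_smul]
  have e2 : (∫ y : ℝ in z₀.im..z.im, g ((z.re : ℂ) + (y : ℂ) * Complex.I)) -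
      ((z.im - z₀.im : ℝ) : ℂ) * g z₀ =
      ∫ y : ℝ in z₀.im..z.im, (g ((z.re : ℂ) + (y : ℂ) * Complex.I) - g z₀) := by
    rw [intervalIntegral.integral_sub ib2 intervalIntegrable_const,
      intervalIntegral.integral_const, Complex.real_smul]
  have n1 : ‖∫ x : ℝ in z₀.re..z.re, (g ((x : ℂ) + (z₀.im : ℂ) * Complex.I) - g z₀)‖ ≤
      ε / 2 * |z.re - z₀.re| := by
    apply intervalIntegral.norm_integral_le_of_norm_le_const
    intro x hx
    have hx' := abs_sub_le_of_uIcc (Set.uIoc_subset_uIcc hx)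
    have heq : ((x : ℂ) + (z₀.im : ℂ) * Complex.I - z₀) = ((x - z₀.re : ℝ) : ℂ) := by
      apply Complex.ext <;> simp
    have hdist : dist ((x : ℂ) + (z₀.im : ℂ) * Complex.I) z₀ < δ₁ := by
      rw [Complex.dist_eq, heq, Complex.norm_real, Real.norm_eq_abs]
      linarith [hzre, hdz]
    have hb := hδ₁' hdist
    rw [dist_eq_norm] at hb
    exact hb.le
  have n2 : ‖∫ y : ℝ in z₀.im..z.im, (g ((z.re : ℂ) + (y : ℂ) * Complex.I) - g z₀)‖ ≤
      ε / 2 * |z.im - z₀.im| := by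
    apply intervalIntegral.norm_integral_le_of_norm_le_const
    intro y hy
    have hy' := abs_sub_le_of_uIcc (Set.uIoc_subset_uIcc hy)
    have heq : ((z.re : ℂ) + (y : ℂ) * Complex.I - z₀) =
        ((z.re - z₀.re : ℝ) : ℂ) + ((y - z₀.im : ℝ) : ℂ) * Complex.I := by
      apply Complex.ext <;> simp
    have hdist : dist ((z.re : ℂ) + (y : ℂ) * Complex.I) z₀ < δ₁ := by
      rw [Complex.dist_eq, heq]
      have htri := norm_add_le (((z.re - z₀.re : ℝ) : ℂ))
        (((y - z₀.im : ℝ) : ℂ) * Complex.I)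
      have h1 : ‖((z.re - z₀.re : ℝ) : ℂ)‖ = |z.re - z₀.re| := by
        rw [Complex.norm_real, Real.norm_eq_abs]
      have h2 : ‖((y - z₀.im : ℝ) : ℂ) * Complex.I‖ = |y - z₀.im| := by
        rw [norm_mul, Complex.norm_I, Complex.norm_real, Real.norm_eq_abs, mul_one]
      rw [h1, h2] at htri
      linarith [hzre, hzim, hdz]
    have hb := hδ₁' hdist
    rw [dist_eq_norm] at hb
    exact hb.le
  rw [e1, e2]
  have hnorm : ‖(z : ℂ) - z₀‖ = dist z z₀ := (dist_eq_norm z z₀).symm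
  calc ‖(∫ x : ℝ in z₀.re..z.re, (g ((x : ℂ) + (z₀.im : ℂ) * Complex.I) - g z₀)) +
        Complex.I * ∫ y : ℝ in z₀.im..z.im, (g ((z.re : ℂ) + (y : ℂ) * Complex.I) - g z₀)‖ ≤
      ‖∫ x : ℝ in z₀.re..z.re, (g ((x : ℂ) + (z₀.im : ℂ) * Complex.I) - g z₀)‖ +
        ‖Complex.I * ∫ y : ℝ in z₀.im..z.im, (g ((z.re : ℂ) + (y : ℂ) * Complex.I) - g z₀)‖ :=
      norm_add_le _ _
    _ = ‖∫ x : ℝ in z₀.re..z.re, (g ((x : ℂ) + (z₀.im : ℂ) * Complex.I) - g z₀)‖ +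
        ‖∫ y : ℝ in z₀.im..z.im, (g ((z.re : ℂ) + (y : ℂ) * Complex.I) - g z₀)‖ := by
      rw [norm_mul, Complex.norm_I, one_mul]
    _ ≤ ε * ‖(z : ℂ) - z₀‖ := by
      rw [hnorm]
      have q1 : ε / 2 * |z.re - z₀.re| ≤ ε / 2 * dist z z₀ :=
        mul_le_mul_of_nonneg_left hzre (by positivity)
      have q2 : ε / 2 * |z.im - z₀.im| ≤ ε / 2 * dist z z₀ :=
        mul_le_mul_of_nonneg_left hzim (by positivity)
      linarith [n1, n2]

end CBAux
namespace CBAux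

lemma halfplane_abs_lt {w a : ℂ} (hw : 0 < w.re) (ha : 0 < a.re) :
    ‖w - a‖ < ‖w + (starRingEnd ℂ) a‖ := by
  have hsq : ‖w + (starRingEnd ℂ) a‖ ^ 2 =
      ‖w - a‖ ^ 2 + 4 * w.re * a.re := by
    rw [Complex.sq_norm, Complex.sq_norm, Complex.normSq_apply, Complex.normSq_apply]
    simp [Complex.add_re, Complex.add_im, Complex.sub_re, Complex.sub_im,
      Complex.conj_re, Complex.conj_im]
    ring
  nlinarith [norm_nonneg (w - a), norm_nonneg (w + (starRingEnd ℂ) a),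
    mul_pos hw ha]

lemma harnack {H : ℂ → ℝ} (hH : HarPos H) {lam z : ℂ} (hlam : lam ∈ unitDisk)
    (hz : ‖z - lam‖ ≤ (1 - ‖lam‖) / 2) : H z ≤ 4 * H lam := by
  obtain ⟨⟨hC2, hlap⟩, hpos⟩ := hH
  set R := 1 - ‖lam‖ with hRdef
  have hR : 0 < R := by
    have := hlam; simp only [unitDisk, Set.mem_setOf_eq] at this; linarith
  set B := Metric.ball lam R with hBdef
  have hBsub : B ⊆ unitDisk := by
    intro w hw
    simp only [unitDisk, Set.mem_setOf_eq]
    have h1 : ‖w - lam‖ < R := by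
      rw [← Complex.dist_eq]; exact Metric.mem_ball.1 hw
    calc ‖w‖ ≤ ‖w - lam‖ + ‖lam‖ := by
          simpa using norm_add_le (w - lam) lam
      _ < 1 := by rw [hRdef] at h1; linarith
  have hzB : z ∈ B := by
    rw [hBdef, Metric.mem_ball, Complex.dist_eq]; linarith
  have hlamB : lam ∈ B := Metric.mem_ball_self hR
  -- primitive of the gradient
  have hgrad : DifferentiableOn ℂ (grad H) B := by
    intro w hw
    obtain ⟨d, hd⟩ := grad_hasDerivAt hC2 hlap (hBsub hw)
    exact hd.differentiableAt.differentiableWithinAt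
  obtain ⟨F₀, hF₀⟩ := exists_primitive hR hgrad
  set F : ℂ → ℂ := fun w => F₀ w - F₀ lam + (H lam : ℂ) with hFdef
  have hF : ∀ w ∈ B, HasDerivAt F (grad H w) w := by
    intro w hw
    exact ((hF₀ w hw).sub_const (F₀ lam)).add_const (H lam : ℂ)
  have hFdiff : DifferentiableOn ℂ F B := fun w hw =>
    (hF w hw).differentiableAt.differentiableWithinAt
  -- real part of F is H
  have hRe : ∀ w ∈ B, (F w).re = H w := by
    have hconst : ∀ w ∈ B, (F w).re - H w = (F lam).re - H lam := by
      intro w hw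
      have hder : ∀ x ∈ B, HasFDerivAt (fun y => (F y).re - H y) (0 : ℂ →L[ℝ] ℝ) x := by
        intro x hx
        have h1 : HasFDerivAt (fun y => (F y).re)
            (Complex.reCLM.comp
              ((ContinuousLinearMap.smulRight (1 : ℂ →L[ℂ] ℂ) (grad H x)).restrictScalars ℝ)) x :=
          Complex.reCLM.hasFDerivAt.comp x ((hF x hx).hasFDerivAt.restrictScalars ℝ)
        have h2 : HasFDerivAt H (fderiv ℝ H x) x := (diffAt hC2 (hBsub hx)).hasFDerivAt
        have h3 := h1.sub h2
        have heq : Complex.reCLM.comp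
            ((ContinuousLinearMap.smulRight (1 : ℂ →L[ℂ] ℂ) (grad H x)).restrictScalars ℝ) -
            fderiv ℝ H x = 0 := by
          apply clm_ext
          · simp [grad]
          · simp [grad]
        rwa [heq] at h3
      have hdiff : DifferentiableOn ℝ (fun y => (F y).re - H y) B := fun x hx =>
        (hder x hx).differentiableAt.differentiableWithinAt
      have hfd : ∀ x ∈ B, fderivWithin ℝ (fun y => (F y).re - H y) B x = 0 := by
        intro x hx
        rw [fderivWithin_of_isOpen Metric.isOpen_ball hx]
        exact (hder x hx).fderiv
      exact (convex_ball lam R).is_const_of_fderivWithin_eq_zero hdiff hfd hw hlamB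
    intro w hw
    have h0 : (F lam).re = H lam := by simp [hFdef]
    have := hconst w hw
    rw [h0] at this
    linarith
  -- Harnack via Schwarz
  have main : ∀ ε : ℝ, 0 < ε → H z ≤ 4 * H lam + 3 * ε := by
    intro ε hε
    set a : ℂ := F lam + (ε : ℝ) with hadef
    have hare : a.re = H lam + ε := by
      rw [hadef]; simp [hRe lam hlamB]
    have hapos : 0 < a.re := by
      rw [hare]; have := hpos lam (hBsub hlamB); linarith
    have hNre : ∀ w ∈ B, (F w + (ε : ℝ)).re = H w + ε := by
      intro w hw; simp [hRe w hw]
    have hNpos : ∀ w ∈ B, 0 < (F w + (ε : ℝ) : ℂ).re := by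
      intro w hw; rw [hNre w hw]; have := hpos w (hBsub hw); linarith
    have hdenne : ∀ w ∈ B, (F w + (ε : ℝ) + (starRingEnd ℂ) a) ≠ 0 := by
      intro w hw hzero
      have : (F w + (ε : ℝ) + (starRingEnd ℂ) a).re = 0 := by rw [hzero]; simp
      rw [Complex.add_re, Complex.conj_re, hNre w hw, hare] at this
      have := hpos w (hBsub hw); have := hpos lam (hBsub hlamB); linarith
    set g : ℂ → ℂ := fun w => (F w + (ε : ℝ) - a) / (F w + (ε : ℝ) + (starRingEnd ℂ) a)
      with hgdef
    have hgdiff : DifferentiableOn ℂ g B := by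
      apply DifferentiableOn.div
      · exact (hFdiff.add_const _).sub_const _
      · exact (hFdiff.add_const _).add_const _
      · exact hdenne
    have hglam : g lam = 0 := by
      rw [hgdef]; simp [hadef]
    have hmaps : Set.MapsTo g B (Metric.ball (g lam) 1) := by
      intro w hw
      rw [hglam, Metric.mem_ball, dist_zero_right, hgdef]
      simp only [norm_div]
      rw [div_lt_one (by
        have := halfplane_abs_lt (hNpos w hw) hapos
        have h0 := norm_nonneg (F w + (ε : ℝ) - a)
        linarith)]
      exact halfplane_abs_lt (hNpos w hw) hapos
    have hschwarz := Complex.dist_le_div_mul_dist_of_mapsTo_ball hgdiff (hmaps.mono_right Metric.ball_subset_closedBall) hzB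
    rw [hglam, dist_zero_right, Complex.dist_eq] at hschwarz
    have hgz : ‖g z‖ ≤ 1 / 2 := by
      calc (‖g z‖ : ℝ) ≤ 1 / R * ‖z - lam‖ := hschwarz
        _ ≤ 1 / R * (R / 2) := by
          apply mul_le_mul_of_nonneg_left _ (by positivity)
          linarith
        _ = 1 / 2 := by field_simp
    -- unfold the bound
    set w : ℂ := F z + (ε : ℝ) with hwdef
    have hwne : w + (starRingEnd ℂ) a ≠ 0 := hdenne z hzB
    have habs : ‖w - a‖ ≤ (1 / 2) * ‖w + (starRingEnd ℂ) a‖ := by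
      have : ‖g z‖ = ‖w - a‖ / ‖w + (starRingEnd ℂ) a‖ := by
        rw [hgdef, hwdef, norm_div]
      rw [this] at hgz
      rw [div_le_iff₀ (by
        have := halfplane_abs_lt (hNpos z hzB) hapos
        have h0 := norm_nonneg (w - a)
        linarith)] at hgz
      linarith [hgz]
    have hsq : ‖w + (starRingEnd ℂ) a‖ ^ 2 =
        ‖w - a‖ ^ 2 + 4 * w.re * a.re := by
      rw [Complex.sq_norm, Complex.sq_norm, Complex.normSq_apply, Complex.normSq_apply]
      simp [Complex.add_re, Complex.add_im, Complex.sub_re, Complex.sub_im,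
        Complex.conj_re, Complex.conj_im]
      ring
    have hre2 : (w.re - a.re) ^ 2 ≤ ‖w - a‖ ^ 2 := by
      have h1 : (w - a).re = w.re - a.re := by simp
      rw [← h1, ← _root_.sq_abs ((w - a).re)]
      have := Complex.abs_re_le_norm (w - a)
      exact pow_le_pow_left₀ (abs_nonneg _) this 2
    have hx : w.re = H z + ε := by rw [hwdef]; simpa using hNre z hzB
    have hα : a.re = H lam + ε := hare
    have hxpos : 0 < w.re := hNpos z hzB
    have hsq2 : ‖w - a‖ ^ 2 ≤
        (1 / 4) * (‖w - a‖ ^ 2 + 4 * w.re * a.re) := by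
      have := pow_le_pow_left₀ (norm_nonneg (w - a)) habs 2
      rw [mul_pow] at this
      nlinarith [this, hsq]
    have hfinal : w.re ≤ 4 * a.re := by
      nlinarith [hsq2, hre2, hxpos, hapos, norm_nonneg (w - a)]
    rw [hx, hα] at hfinal
    linarith
  by_contra hcon
  push_neg at hcon
  have := main ((H z - 4 * H lam) / 6) (by linarith)
  linarith

end CBAux
namespace CBAux

lemma pDist_symm (z w : ℂ) : pDist z w = pDist w z := by
  unfold pDist
  rw [norm_div, norm_div]
  have h1 : ‖z - w‖ = ‖w - z‖ := norm_sub_rev z w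
  have h2 : (starRingEnd ℂ) (1 - (starRingEnd ℂ) z * w) = 1 - (starRingEnd ℂ) w * z := by
    rw [map_sub, map_mul, map_one, Complex.conj_conj]
    ring
  rw [h1, ← Complex.norm_conj (1 - (starRingEnd ℂ) z * w), h2]

lemma pdist_euclid {lam mu : ℂ} (hl : lam ∈ unitDisk) (hm : mu ∈ unitDisk)
    (h : pDist lam mu < 1 / 8) : ‖mu - lam‖ ≤ (1 - ‖lam‖) / 2 := by
  have hl' : ‖lam‖ < 1 := hl
  have hm' : ‖mu‖ < 1 := hm
  have hl0 : 0 ≤ ‖lam‖ := norm_nonneg lam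
  have hm0 : 0 ≤ ‖mu‖ := norm_nonneg mu
  set D := ‖1 - (starRingEnd ℂ) lam * mu‖ with hDdef
  have hDne : (1 - (starRingEnd ℂ) lam * mu) ≠ 0 := by
    intro h0
    have : (starRingEnd ℂ) lam * mu = 1 := by
      have := sub_eq_zero.1 h0; linear_combination -this
    have habs := congrArg (‖·‖) this
    rw [norm_mul, Complex.norm_conj, norm_one] at habs
    nlinarith
  have hD0 : 0 < D := norm_pos_iff.2 hDne
  have hd : ‖lam - mu‖ = pDist lam mu * D := by
    rw [pDist, norm_div, ← hDdef, div_mul_cancel₀]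
    exact hD0.ne'
  have hDle : D ≤ (1 - ‖lam‖ ^ 2) + ‖lam - mu‖ := by
    have hsplit : (1 : ℂ) - (starRingEnd ℂ) lam * mu =
        (1 - (starRingEnd ℂ) lam * lam) + (starRingEnd ℂ) lam * (lam - mu) := by ring
    rw [hDdef, hsplit]
    refine le_trans (norm_add_le _ _) ?_
    have e1 : ‖1 - (starRingEnd ℂ) lam * lam‖ = 1 - ‖lam‖ ^ 2 := by
      rw [← Complex.normSq_eq_conj_mul_self]
      rw [show ((1 : ℂ) - (Complex.normSq lam : ℝ)) = ((1 - Complex.normSq lam : ℝ) : ℂ) by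
        push_cast; ring]
      rw [Complex.norm_real, Real.norm_eq_abs, ← Complex.sq_norm, _root_.abs_of_nonneg (by nlinarith)]
    have e2 : ‖(starRingEnd ℂ) lam * (lam - mu)‖ ≤ ‖lam - mu‖ := by
      rw [norm_mul, Complex.norm_conj]
      nlinarith [norm_nonneg (lam - mu)]
    linarith
  have hp0 : 0 ≤ pDist lam mu := norm_nonneg _
  have hX : 0 < (1 - ‖lam‖ ^ 2) + ‖lam - mu‖ := by
    nlinarith [norm_nonneg (lam - mu)]
  have hd8 : ‖lam - mu‖ < 1 / 8 * ((1 - ‖lam‖ ^ 2) +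
      ‖lam - mu‖) := by
    have t1 := mul_le_mul_of_nonneg_left hDle hp0
    have t2 := mul_lt_mul_of_pos_right h hX
    linarith [hd]
  have habs : ‖mu - lam‖ = ‖lam - mu‖ := norm_sub_rev mu lam
  rw [habs]
  nlinarith [norm_nonneg (lam - mu)]

lemma exp_three : (8:ℝ) < Real.exp 3 := by
  have h := Real.exp_one_gt_d9
  have h3 : Real.exp 3 = Real.exp 1 * Real.exp 1 * Real.exp 1 := by
    rw [← Real.exp_add, ← Real.exp_add]; norm_num
  rw [h3]; nlinarith [Real.exp_pos 1]

end CBAux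

open CBAux

/-- If `Λ` is the union of `n` weakly separated sequences, then for some
`H ∈ Har₊(𝔻)` every disk `D(λ, e^{-H(λ)})`, `λ ∈ Λ`, contains at most `n`
points of `Λ`. -/
theorem count_bound_of_union_of_weaklySep
    (n : ℕ) (hn : 1 ≤ n) (Λ : Set ℂ) (hΛ : DiscreteSeq Λ)
    (h : ∃ Λs : Fin n → Set ℂ, Λ = ⋃ i, Λs i ∧ ∀ i, WeaklySep (Λs i)) :
    ∃ H : ℂ → ℝ, HarPos H ∧
      ∀ lam ∈ Λ, (Λ ∩ pDisk lam (Real.exp (-H lam))).encard ≤ (n : ℕ∞) := by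
  classical
  obtain ⟨Λs, hcup, hws⟩ := h
  choose Hi hHi hdisj using hws
  have hΛsub : ∀ i, Λs i ⊆ unitDisk := by
    intro i
    refine subset_trans ?_ hΛ.1
    rw [hcup]; exact Set.subset_iUnion Λs i
  set H : ℂ → ℝ := fun z => 3 + 4 * ∑ i, Hi i z with hHdef
  have hHpos : HarPos H := by
    exact harPos_add (harPos_const 3 (by norm_num))
      (harPos_const_mul (harPos_sum Finset.univ (fun i => Hi i) (fun i _ => hHi i))
        (by norm_num))
  refine ⟨H, hHpos, ?_⟩
  intro lam hlam
  have hlamD : lam ∈ unitDisk := hΛ.1 hlam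
  set r := Real.exp (-H lam) with hrdef
  have hHlam3 : 3 ≤ H lam := by
    rw [hHdef]
    have : 0 ≤ ∑ i, Hi i lam :=
      Finset.sum_nonneg fun i _ => (hHi i).2 lam hlamD
    simp only []
    linarith
  have hr8 : r < 1 / 8 := by
    rw [hrdef]
    have h1 : Real.exp (-H lam) ≤ Real.exp (-3) := Real.exp_le_exp.2 (by linarith)
    have h2 : Real.exp (-3) < 1 / 8 := by
      rw [Real.exp_neg]
      rw [inv_lt_comm₀ (Real.exp_pos 3) (by norm_num)]
      simpa using exp_three
    linarith
  -- lam belongs to the small pseudohyperbolic disk of every nearby point of Λs i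
  have hclam : ∀ i, ∀ mu ∈ Λs i, pDist lam mu < r →
      lam ∈ pDisk mu (Real.exp (-Hi i mu)) := by
    intro i mu hmu hpd
    have hmuD : mu ∈ unitDisk := hΛsub i hmu
    have heuclid : ‖mu - lam‖ ≤ (1 - ‖lam‖) / 2 :=
      pdist_euclid hlamD hmuD (lt_trans hpd hr8)
    have hharnack : Hi i mu ≤ 4 * Hi i lam := harnack (hHi i) hlamD heuclid
    have hsum : Hi i lam ≤ ∑ j, Hi j lam := by
      apply Finset.single_le_sum (fun j _ => (hHi j).2 lam hlamD) (Finset.mem_univ i)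
    have hle : Hi i mu ≤ H lam := by
      rw [hHdef]; simp only []; linarith
    refine ⟨hlamD, ?_⟩
    rw [pDist_symm]
    calc pDist lam mu < r := hpd
      _ ≤ Real.exp (-Hi i mu) := by
        rw [hrdef]; exact Real.exp_le_exp.2 (by linarith)
  have hsubsing : ∀ i, (Λs i ∩ pDisk lam r).Subsingleton := by
    intro i x hx y hy
    by_contra hxy
    have hxmem : lam ∈ pDisk x (Real.exp (-Hi i x)) :=
      hclam i x hx.1 hx.2.2
    have hymem : lam ∈ pDisk y (Real.exp (-Hi i y)) :=
      hclam i y hy.1 hy.2.2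
    exact Set.disjoint_left.1 (hdisj i x hx.1 y hy.1 hxy) hxmem hymem
  -- count
  set f : Fin n → ℂ := fun i =>
    if h : (Λs i ∩ pDisk lam r).Nonempty then h.choose else 0 with hfdef
  have hsub : Λ ∩ pDisk lam r ⊆ Set.range f := by
    rintro p ⟨hp1, hp2⟩
    rw [hcup] at hp1
    obtain ⟨i, hpi⟩ := Set.mem_iUnion.1 hp1
    have hne : (Λs i ∩ pDisk lam r).Nonempty := ⟨p, hpi, hp2⟩
    refine ⟨i, ?_⟩
    rw [hfdef]
    simp only [dif_pos hne]
    exact hsubsing i hne.choose_spec ⟨hpi, hp2⟩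
  calc (Λ ∩ pDisk lam r).encard ≤ (Set.range f).encard := Set.encard_mono hsub
    _ = (f '' Set.univ).encard := by rw [Set.image_univ]
    _ ≤ (Set.univ : Set (Fin n)).encard := Set.encard_image_le _ _
    _ = (n : ℕ∞) := by simp [Set.encard_univ]
end
end

section
/- Let n ≥ 1 and let Λ be a discrete sequence in the unit disk 𝔻 for which there exists H ∈ Har₊(𝔻) such that every pseudohyperbolic disk D(λ, e^{−H(λ)}), λ ∈ Λ, contains at most n points of Λ. Then Λ can be written as the union of n weakly separated sequences. -/
open Complex Set Topology Filter

noncomputable section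

lemma one_sub_ne {a b : ℂ} (h : ‖a*b‖ < 1) : 1 - a*b ≠ 0 := by
  intro he
  have : a*b = 1 := by linear_combination -he
  rw [this] at h; simp at h

lemma normSq_identity (u z : ℂ) :
    Complex.normSq (1 - (starRingEnd ℂ) u * z) - Complex.normSq (z - u)
      = (1 - Complex.normSq u) * (1 - Complex.normSq z) := by
  simp [Complex.normSq_apply, Complex.sub_re, Complex.sub_im, Complex.mul_re, Complex.mul_im,
    Complex.one_re, Complex.one_im, Complex.conj_re, Complex.conj_im]
  ring

lemma abs_lt_abs_iff {a b : ℂ} : ‖a‖ < ‖b‖ ↔ Complex.normSq a < Complex.normSq b := by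
  rw [← Complex.sq_norm, ← Complex.sq_norm]
  constructor
  · intro h; exact pow_lt_pow_left₀ h (norm_nonneg a) (by norm_num)
  · intro h
    by_contra hc
    push_neg at hc
    exact absurd (pow_le_pow_left₀ (norm_nonneg b) hc 2) (not_le.2 h)

lemma abs_blaschke_lt_one {u z : ℂ} (hu : u ∈ unitDisk) (hz : z ∈ unitDisk) :
    ‖blaschke u z‖ < 1 := by
  have hu1 : ‖u‖ < 1 := hu
  have hz1 : ‖z‖ < 1 := hz
  have hd : (1 : ℂ) - (starRingEnd ℂ) u * z ≠ 0 := by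
    apply one_sub_ne
    rw [norm_mul, Complex.norm_conj]
    exact mul_lt_one_of_nonneg_of_lt_one_left (norm_nonneg u) hu1 (le_of_lt hz1)
  have key : Complex.normSq (z - u) < Complex.normSq (1 - (starRingEnd ℂ) u * z) := by
    have h1 : 0 < (1 - Complex.normSq u) * (1 - Complex.normSq z) := by
      apply mul_pos <;>
      · rw [sub_pos, ← Complex.sq_norm]
        nlinarith [norm_nonneg u, norm_nonneg z]
    nlinarith [normSq_identity u z]
  rw [blaschke, norm_div]
  rw [div_lt_one (norm_pos_iff.mpr hd)]
  exact abs_lt_abs_iff.2 key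

lemma pDist_symm (z w : ℂ) : pDist z w = pDist w z := by
  unfold pDist
  rw [norm_div, norm_div]
  congr 1
  · exact norm_sub_rev z w
  · have : (1 - (starRingEnd ℂ) w * z) = (starRingEnd ℂ) (1 - (starRingEnd ℂ) z * w) := by
      rw [map_sub, map_mul, map_one, Complex.conj_conj]; ring
    rw [this, Complex.norm_conj]

-- L0 : pDist a b ≤ |a| + |b| for a b in disk
lemma pDist_le_add_abs {a b : ℂ} (ha : a ∈ unitDisk) (hb : b ∈ unitDisk) :
    ‖a - b‖ / ‖1 - (starRingEnd ℂ) a * b‖ ≤ ‖a‖ + ‖b‖ := by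
  have ha1 : ‖a‖ < 1 := ha
  have hb1 : ‖b‖ < 1 := hb
  have hd : (1 : ℂ) - (starRingEnd ℂ) a * b ≠ 0 := by
    apply one_sub_ne
    rw [norm_mul, Complex.norm_conj]
    exact mul_lt_one_of_nonneg_of_lt_one_left (norm_nonneg a) ha1 (le_of_lt hb1)
  rw [div_le_iff₀ (norm_pos_iff.mpr hd)]
  have e1 : Complex.normSq (a - b)
      = (‖a‖)^2 + (‖b‖)^2 - 2*((starRingEnd ℂ) a * b).re := by
    rw [Complex.sq_norm, Complex.sq_norm]
    simp [Complex.normSq_apply, Complex.sub_re, Complex.sub_im, Complex.mul_re,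
      Complex.conj_re, Complex.conj_im]
    ring
  have e2 : Complex.normSq (1 - (starRingEnd ℂ) a * b)
      = 1 + (‖a‖)^2*(‖b‖)^2 - 2*((starRingEnd ℂ) a * b).re := by
    rw [Complex.sq_norm, Complex.sq_norm]
    simp [Complex.normSq_apply, Complex.sub_re, Complex.sub_im, Complex.mul_re, Complex.mul_im,
      Complex.one_re, Complex.one_im, Complex.conj_re, Complex.conj_im]
    ring
  have ht : |((starRingEnd ℂ) a * b).re| ≤ ‖a‖ * ‖b‖ := by
    calc |((starRingEnd ℂ) a * b).re| ≤ ‖(starRingEnd ℂ) a * b‖ := Complex.abs_re_le_norm _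
    _ = ‖a‖ * ‖b‖ := by rw [norm_mul, Complex.norm_conj]
  set p := ‖a‖ with hpdef
  set q := ‖b‖ with hqdef
  set t := ((starRingEnd ℂ) a * b).re with htdef
  have hp0 : 0 ≤ p := norm_nonneg a
  have hq0 : 0 ≤ q := norm_nonneg b
  have key : p^2 + q^2 - 2*t ≤ (p+q)^2 * (1 + p^2*q^2 - 2*t) := by
    rw [abs_le] at ht
    obtain ⟨ht', ht⟩ := ht
    rcases le_total (p+q) 1 with h | h
    · nlinarith [mul_nonneg (by linarith : (0:ℝ) ≤ t + p*q) (by nlinarith : (0:ℝ) ≤ 1 - (p+q)^2),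
        mul_nonneg (sq_nonneg (p+q)) (by nlinarith [mul_nonneg hp0 hq0] : (0:ℝ) ≤ (1+p*q)^2 - 1)]
    · have h1 : (0:ℝ) ≤ q*(2 - p*(p+q)) := by nlinarith
      have h2 : (0:ℝ) ≤ p*(2 - q*(p+q)) := by nlinarith
      nlinarith [mul_nonneg (by linarith : (0:ℝ) ≤ p*q - t) (by nlinarith : (0:ℝ) ≤ (p+q)^2 - 1),
        mul_nonneg h1 h2]
  have h2 : (‖a-b‖)^2 ≤ ((p+q) * ‖1 - (starRingEnd ℂ) a * b‖)^2 := by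
    rw [Complex.sq_norm, mul_pow, Complex.sq_norm, e1, e2]; exact key
  have := Real.sqrt_le_sqrt h2
  rwa [Real.sqrt_sq (norm_nonneg _), Real.sqrt_sq (by positivity)] at this

lemma blaschke_conj (u z : ℂ) : (starRingEnd ℂ) (blaschke u z)
    = ((starRingEnd ℂ) z - (starRingEnd ℂ) u) / (1 - u * (starRingEnd ℂ) z) := by
  simp [blaschke, map_div₀, map_sub, map_mul, Complex.conj_conj]

lemma key_id (u z w : ℂ) (h1 : 1 - (starRingEnd ℂ) u * z ≠ 0)
    (h2 : 1 - (starRingEnd ℂ) u * w ≠ 0) (h3 : 1 - u * (starRingEnd ℂ) z ≠ 0) :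
    (blaschke u z - blaschke u w) * ((1 - (starRingEnd ℂ) z * w) * (1 - (starRingEnd ℂ) u * z)) =
    (1 - (starRingEnd ℂ) (blaschke u z) * blaschke u w) * ((z - w) * (1 - u * (starRingEnd ℂ) z)) := by
  have h1' : 1 - z * (starRingEnd ℂ) u ≠ 0 := by rwa [mul_comm]
  have h2' : 1 - w * (starRingEnd ℂ) u ≠ 0 := by rwa [mul_comm]
  have h3' : 1 - (starRingEnd ℂ) z * u ≠ 0 := by rwa [mul_comm]
  rw [blaschke_conj]
  unfold blaschke
  field_simp
  ring

lemma one_sub_conj_mul_ne {a b : ℂ} (ha : ‖a‖ < 1) (hb : ‖b‖ < 1) :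
    1 - (starRingEnd ℂ) a * b ≠ 0 := by
  apply one_sub_ne
  rw [norm_mul, Complex.norm_conj]
  exact mul_lt_one_of_nonneg_of_lt_one_left (norm_nonneg a) ha (le_of_lt hb)

lemma pDist_blaschke {u z w : ℂ} (hu : u ∈ unitDisk) (hz : z ∈ unitDisk) (hw : w ∈ unitDisk) :
    pDist (blaschke u z) (blaschke u w) = pDist z w := by
  have hu1 : ‖u‖ < 1 := hu
  have hz1 : ‖z‖ < 1 := hz
  have hw1 : ‖w‖ < 1 := hw
  have h1 : 1 - (starRingEnd ℂ) u * z ≠ 0 := one_sub_conj_mul_ne hu1 hz1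
  have h2 : 1 - (starRingEnd ℂ) u * w ≠ 0 := one_sub_conj_mul_ne hu1 hw1
  have h3conj : (1 : ℂ) - u * (starRingEnd ℂ) z = (starRingEnd ℂ) (1 - (starRingEnd ℂ) u * z) := by
    rw [map_sub, map_mul, map_one, Complex.conj_conj]
  have h3 : 1 - u * (starRingEnd ℂ) z ≠ 0 := by
    intro he
    apply h1
    have h' := congrArg (starRingEnd ℂ) he
    simpa [map_sub, map_mul, Complex.conj_conj] using h' 
  have hzw : 1 - (starRingEnd ℂ) z * w ≠ 0 := one_sub_conj_mul_ne hz1 hw1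
  have hA : ‖blaschke u z‖ < 1 := abs_blaschke_lt_one hu hz
  have hB : ‖blaschke u w‖ < 1 := abs_blaschke_lt_one hu hw
  have hAB : 1 - (starRingEnd ℂ) (blaschke u z) * blaschke u w ≠ 0 := one_sub_conj_mul_ne hA hB
  have key := key_id u z w h1 h2 h3
  have habs := congrArg norm key
  rw [norm_mul, norm_mul, norm_mul, norm_mul] at habs
  rw [h3conj, Complex.norm_conj] at habs
  have hpos : 0 < ‖1 - (starRingEnd ℂ) u * z‖ := norm_pos_iff.mpr h1
  have habs2 : ‖blaschke u z - blaschke u w‖ * ‖1 - (starRingEnd ℂ) z * w‖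
      = ‖1 - (starRingEnd ℂ) (blaschke u z) * blaschke u w‖ * ‖z - w‖ := by
    have := habs
    field_simp at this ⊢
    nlinarith [this, hpos]
  unfold pDist
  rw [norm_div, norm_div]
  rw [div_eq_div_iff (norm_ne_zero_iff.mpr hAB) (norm_ne_zero_iff.mpr hzw)]
  linarith [habs2]

lemma pDist_triangle {z u w : ℂ} (hz : z ∈ unitDisk) (hu : u ∈ unitDisk) (hw : w ∈ unitDisk) :
    pDist z w ≤ pDist z u + pDist u w := by
  have hA : blaschke u z ∈ unitDisk := abs_blaschke_lt_one hu hz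
  have hB : blaschke u w ∈ unitDisk := abs_blaschke_lt_one hu hw
  have inv := pDist_blaschke hu hz hw
  have L0 := pDist_le_add_abs hA hB
  have e1 : ‖blaschke u z‖ = pDist z u := by
    unfold pDist blaschke
    rw [norm_div, norm_div,
      show (1 : ℂ) - (starRingEnd ℂ) z * u = (starRingEnd ℂ) (1 - (starRingEnd ℂ) u * z) from by
        rw [map_sub, map_mul, map_one, Complex.conj_conj]; ring,
      Complex.norm_conj]
  have e2 : ‖blaschke u w‖ = pDist u w := by
    unfold pDist blaschke
    rw [norm_div, norm_div, norm_sub_rev w u]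
  calc pDist z w = pDist (blaschke u z) (blaschke u w) := inv.symm
    _ ≤ ‖blaschke u z‖ + ‖blaschke u w‖ := by
        have : pDist (blaschke u z) (blaschke u w)
            = ‖blaschke u z - blaschke u w‖ /
              ‖1 - (starRingEnd ℂ) (blaschke u z) * blaschke u w‖ := by
          unfold pDist; rw [norm_div]
        rw [this]; exact L0
    _ = pDist z u + pDist u w := by rw [e1, e2]

lemma harPos_add_const {H : ℂ → ℝ} (hH : HarPos H) {c : ℝ} (hc : 0 ≤ c) :
    HarPos (fun z => H z + c) := by
  obtain ⟨⟨hsm, hlap⟩, hpos⟩ := hH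
  refine ⟨⟨hsm.add contDiffOn_const, fun z hz => ?_⟩, fun z hz => add_nonneg (hpos z hz) hc⟩
  have e1 : (fun w => fderiv ℝ (fun u => H u + c) w 1) = fun w => fderiv ℝ H w 1 := by
    funext w; rw [fderiv_add_const]
  have e2 : (fun w => fderiv ℝ (fun u => H u + c) w Complex.I)
      = fun w => fderiv ℝ H w Complex.I := by
    funext w; rw [fderiv_add_const]
  have : laplacian (fun z => H z + c) z = laplacian H z := by
    unfold laplacian
    rw [e1, e2]
  rw [this]
  exact hlap z hz

lemma discrete_finite_inter {Λ : Set ℂ} (hΛ : DiscreteSeq Λ) {r : ℝ} (hr : r < 1) :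
    (Λ ∩ Metric.closedBall 0 r).Finite := by
  by_contra hinf
  have hne : (Filter.cofinite ⊓ Filter.principal (Λ ∩ Metric.closedBall 0 r)).NeBot := by
    rw [← Filter.frequently_mem_iff_neBot]
    exact Filter.frequently_cofinite_iff_infinite.2 hinf
  have hle : Filter.cofinite ⊓ Filter.principal (Λ ∩ Metric.closedBall 0 r)
      ≤ Filter.principal (Metric.closedBall (0:ℂ) r) :=
    le_trans inf_le_right (Filter.principal_mono.2 inter_subset_right)
  obtain ⟨x, hxK, hx⟩ := (isCompact_closedBall (0:ℂ) r).exists_clusterPt hle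
  have hxD : x ∈ unitDisk := by
    have : ‖x‖ ≤ r := by
      simpa [Complex.dist_eq] using Metric.mem_closedBall.1 hxK
    exact lt_of_le_of_lt this hr
  apply hΛ.2 x hxD
  rw [AccPt]
  have hle2 : 𝓝 x ⊓ (Filter.cofinite ⊓ Filter.principal (Λ ∩ Metric.closedBall 0 r))
      ≤ 𝓝[≠] x ⊓ Filter.principal Λ := by
    rw [nhdsWithin]
    refine le_inf (le_inf inf_le_left ?_) ?_
    · refine le_trans (inf_le_right.trans inf_le_left) ?_
      intro s hs
      rw [Filter.mem_principal] at hs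
      rw [Filter.mem_cofinite]
      exact (Set.finite_singleton x).subset (by simpa using compl_subset_compl.2 hs)
    · exact le_trans (inf_le_right.trans inf_le_right) (Filter.principal_mono.2 inter_subset_left)
  exact Filter.NeBot.mono hx hle2

lemma discrete_countable {Λ : Set ℂ} (hΛ : DiscreteSeq Λ) : Λ.Countable := by
  have hsub : Λ ⊆ ⋃ k : ℕ, (Λ ∩ Metric.closedBall 0 (1 - 1/(k+1))) := by
    intro z hz
    have hz1 : ‖z‖ < 1 := hΛ.1 hz
    obtain ⟨k, hk⟩ := exists_nat_one_div_lt (by linarith : (0:ℝ) < 1 - ‖z‖)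
    refine Set.mem_iUnion.2 ⟨k, hz, ?_⟩
    rw [Metric.mem_closedBall]
    simp only [Complex.dist_eq, sub_zero]
    linarith
  refine Set.Countable.mono hsub ?_
  refine Set.countable_iUnion fun k => ?_
  have hk : (1:ℝ) - 1/(k+1) < 1 := by
    have : (0:ℝ) < 1/(k+1) := by positivity
    linarith
  exact (discrete_finite_inter hΛ hk).countable

lemma finset_coloring {α : Type*} {n : ℕ} (hn : 1 ≤ n) (Λ : Set α) (Bad : α → α → Prop)
    (hsymm : ∀ a b, Bad a b → Bad b a) (hirr : ∀ a, ¬ Bad a a) (f : α → ℝ)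
    (hdeg : ∀ a ∈ Λ, ({b | b ∈ Λ ∧ Bad a b ∧ f a ≤ f b}).Finite ∧
      ({b | b ∈ Λ ∧ Bad a b ∧ f a ≤ f b}).ncard + 1 ≤ n) :
    ∀ S : Finset α, ↑S ⊆ Λ → ∃ c : α → Fin n, ∀ lam ∈ S, ∀ mu ∈ S, Bad lam mu → c lam ≠ c mu := by
  classical
  intro S
  induction S using Finset.strongInductionOn with
  | _ S ih =>
    intro hS
    rcases S.eq_empty_or_nonempty with rfl | hne
    · exact ⟨fun _ => ⟨0, hn⟩, by simp⟩
    obtain ⟨l0, hl0S, hmin⟩ := S.exists_min_image f hne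
    have hl0Λ : l0 ∈ Λ := hS hl0S
    set S' := S.erase l0 with hS'
    obtain ⟨c, hc⟩ := ih S' (Finset.erase_ssubset hl0S)
      (fun x hx => hS (Finset.erase_subset _ _ hx))
    set B := S'.filter (fun μ => Bad l0 μ) with hB
    have hBsub : ↑B ⊆ {b | b ∈ Λ ∧ Bad l0 b ∧ f l0 ≤ f b} := by
      intro μ hμ
      rw [Finset.mem_coe, hB, Finset.mem_filter] at hμ
      obtain ⟨hμS', hbad⟩ := hμ
      have hμS : μ ∈ S := Finset.mem_of_mem_erase hμS'
      exact ⟨hS hμS, hbad, hmin μ hμS⟩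
    have hcardB : B.card + 1 ≤ n := by
      obtain ⟨hfin, hle⟩ := hdeg l0 hl0Λ
      have : B.card ≤ ({b | b ∈ Λ ∧ Bad l0 b ∧ f l0 ≤ f b}).ncard := by
        rw [← Set.ncard_coe_finset]
        exact Set.ncard_le_ncard hBsub hfin
      omega
    have himg : (B.image c).card < n := by
      calc (B.image c).card ≤ B.card := Finset.card_image_le
        _ < n := by omega
    have hex : ∃ i : Fin n, i ∉ B.image c := by
      by_contra hcon
      push_neg at hcon
      have : (Finset.univ : Finset (Fin n)) ⊆ B.image c := fun i _ => hcon i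
      have := Finset.card_le_card this
      simp at this
      omega
    obtain ⟨i, hi⟩ := hex
    refine ⟨Function.update c l0 i, ?_⟩
    intro lam hlam mu hmu hbad
    by_cases hl : lam = l0 <;> by_cases hm : mu = l0
    · rw [hl, hm] at hbad
      exact absurd hbad (hirr l0)
    · subst hl
      rw [Function.update_self, Function.update_of_ne hm]
      have hmB : mu ∈ B := by
        rw [hB, Finset.mem_filter]
        exact ⟨Finset.mem_erase.2 ⟨hm, hmu⟩, hbad⟩
      exact fun h => hi (h ▸ Finset.mem_image_of_mem c hmB)
    · subst hm
      rw [Function.update_self, Function.update_of_ne hl]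
      have hlB : lam ∈ B := by
        rw [hB, Finset.mem_filter]
        exact ⟨Finset.mem_erase.2 ⟨hl, hlam⟩, hsymm lam mu hbad⟩
      exact fun h => hi (h.symm ▸ Finset.mem_image_of_mem c hlB)
    · rw [Function.update_of_ne hl, Function.update_of_ne hm]
      exact hc lam (Finset.mem_erase.2 ⟨hl, hlam⟩) mu (Finset.mem_erase.2 ⟨hm, hmu⟩) hbad

lemma countable_coloring {α : Type*} {n : ℕ} (hn : 1 ≤ n) (Λ : Set α) (hcnt : Λ.Countable)
    (Bad : α → α → Prop) (hsymm : ∀ a b, Bad a b → Bad b a) (hirr : ∀ a, ¬ Bad a a) (f : α → ℝ)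
    (hdeg : ∀ a ∈ Λ, ({b | b ∈ Λ ∧ Bad a b ∧ f a ≤ f b}).Finite ∧
      ({b | b ∈ Λ ∧ Bad a b ∧ f a ≤ f b}).ncard + 1 ≤ n) :
    ∃ c : α → Fin n, ∀ lam ∈ Λ, ∀ mu ∈ Λ, Bad lam mu → c lam ≠ c mu := by
  classical
  rcases Λ.eq_empty_or_nonempty with rfl | hne
  · exact ⟨fun _ => ⟨0, hn⟩, by simp⟩
  obtain ⟨g, hg⟩ := Set.Countable.exists_eq_range hcnt hne
  have hSsub : ∀ m : ℕ, ↑((Finset.range (m+1)).image g) ⊆ Λ := by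
    intro m x hx
    rw [Finset.coe_image] at hx
    obtain ⟨k, _, rfl⟩ := hx
    rw [hg]; exact Set.mem_range_self k
  have hcols : ∀ m : ℕ, ∃ c : α → Fin n,
      ∀ lam ∈ (Finset.range (m+1)).image g, ∀ mu ∈ (Finset.range (m+1)).image g,
        Bad lam mu → c lam ≠ c mu :=
    fun m => finset_coloring hn Λ Bad hsymm hirr f hdeg _ (hSsub m)
  choose cs hcs using hcols
  let U : Ultrafilter ℕ := Ultrafilter.of Filter.atTop
  have hUatTop : (U : Filter ℕ) ≤ Filter.atTop := Ultrafilter.of_le _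
  have hcol : ∀ a : α, ∃ i : Fin n, {m | cs m a = i} ∈ U := by
    intro a
    by_contra hcon
    push_neg at hcon
    have hcompl : ∀ i : Fin n, {m | cs m a = i}ᶜ ∈ (U : Filter ℕ) := by
      intro i
      exact Ultrafilter.compl_mem_iff_notMem.2 (hcon i)
    have hint : (⋂ i : Fin n, {m | cs m a = i}ᶜ) ∈ (U : Filter ℕ) := by
      exact Filter.iInter_mem.2 hcompl
    have hempty : (⋂ i : Fin n, {m | cs m a = i}ᶜ) = ∅ := by
      ext m
      simp only [Set.mem_iInter, Set.mem_compl_iff, Set.mem_setOf_eq, Set.mem_empty_iff_false,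
        iff_false, not_forall, not_not]
      exact ⟨cs m a, rfl⟩
    rw [hempty] at hint
    exact Filter.empty_notMem (U : Filter ℕ) hint
  choose col hcolmem using hcol
  refine ⟨col, ?_⟩
  intro lam hlam mu hmu hbad
  rw [hg] at hlam hmu
  obtain ⟨k1, hk1⟩ := hlam
  obtain ⟨k2, hk2⟩ := hmu
  have hmem1 : {m | lam ∈ (Finset.range (m+1)).image g} ∈ U := by
    apply hUatTop
    refine Filter.mem_atTop_sets.2 ⟨k1, fun m hm => ?_⟩
    exact Finset.mem_image.2 ⟨k1, Finset.mem_range.2 (by omega), hk1⟩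
  have hmem2 : {m | mu ∈ (Finset.range (m+1)).image g} ∈ U := by
    apply hUatTop
    refine Filter.mem_atTop_sets.2 ⟨k2, fun m hm => ?_⟩
    exact Finset.mem_image.2 ⟨k2, Finset.mem_range.2 (by omega), hk2⟩
  have hall : {m | cs m lam = col lam} ∩ {m | cs m mu = col mu}
      ∩ ({m | lam ∈ (Finset.range (m+1)).image g} ∩ {m | mu ∈ (Finset.range (m+1)).image g}) ∈ U :=
    Filter.inter_mem (Filter.inter_mem (hcolmem lam) (hcolmem mu)) (Filter.inter_mem hmem1 hmem2)
  obtain ⟨m, ⟨⟨h1, h2⟩, h3, h4⟩⟩ := Filter.nonempty_of_mem hall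
  have := hcs m lam h3 mu h4 hbad
  rw [h1, h2] at this
  exact this

/-- If for some `H ∈ Har₊(𝔻)` every disk `D(λ, e^{-H(λ)})`, `λ ∈ Λ`, contains
at most `n` points of `Λ`, then `Λ` is the union of `n` weakly separated
sequences. -/
theorem union_of_weaklySep_of_count_bound
    (n : ℕ) (hn : 1 ≤ n) (Λ : Set ℂ) (hΛ : DiscreteSeq Λ)
    (h : ∃ H : ℂ → ℝ, HarPos H ∧
      ∀ lam ∈ Λ, (Λ ∩ pDisk lam (Real.exp (-H lam))).encard ≤ (n : ℕ∞)) :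
    ∃ Λs : Fin n → Set ℂ, Λ = ⋃ i, Λs i ∧ ∀ i, WeaklySep (Λs i) := by
  classical
  obtain ⟨H, hH, hcount⟩ := h
  have hΛsub : Λ ⊆ unitDisk := hΛ.1
  set Bad : ℂ → ℂ → Prop :=
    fun a b => a ≠ b ∧ pDist a b < max (Real.exp (-H a)) (Real.exp (-H b)) with hBadDef
  have hsymm : ∀ a b, Bad a b → Bad b a := by
    intro a b ⟨h1, h2⟩
    exact ⟨h1.symm, by rwa [pDist_symm b a, max_comm]⟩
  have hirr : ∀ a, ¬ Bad a a := fun a h => h.1 rfl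
  have hdeg : ∀ a ∈ Λ, ({b | b ∈ Λ ∧ Bad a b ∧ H a ≤ H b}).Finite ∧
      ({b | b ∈ Λ ∧ Bad a b ∧ H a ≤ H b}).ncard + 1 ≤ n := by
    intro a ha
    set N := {b | b ∈ Λ ∧ Bad a b ∧ H a ≤ H b} with hN
    have hsub2 : N ⊆ (Λ ∩ pDisk a (Real.exp (-H a))) \ {a} := by
      rintro b ⟨hbΛ, ⟨hne', hlt⟩, hHle⟩
      have hmax : max (Real.exp (-H a)) (Real.exp (-H b)) = Real.exp (-H a) :=
        max_eq_left (Real.exp_le_exp.2 (neg_le_neg hHle))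
      rw [hmax] at hlt
      exact ⟨⟨hbΛ, hΛsub hbΛ, hlt⟩, fun hb => hne' (by simpa using hb.symm)⟩
    have ha_mem : a ∈ Λ ∩ pDisk a (Real.exp (-H a)) := by
      refine ⟨ha, hΛsub ha, ?_⟩
      have : pDist a a = 0 := by simp [pDist]
      rw [this]
      exact Real.exp_pos _
    have hchain : N.encard + 1 ≤ (n : ℕ∞) := by
      calc N.encard + 1 ≤ ((Λ ∩ pDisk a (Real.exp (-H a))) \ {a}).encard + 1 :=
            add_le_add_left (Set.encard_mono hsub2) 1
        _ = (Λ ∩ pDisk a (Real.exp (-H a))).encard := Set.encard_diff_singleton_add_one ha_mem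
        _ ≤ (n : ℕ∞) := hcount a ha
    have hNen : N.encard ≤ (n : ℕ∞) := le_trans (le_add_right le_rfl) hchain
    obtain ⟨hfin, hncard⟩ := Set.encard_le_coe_iff_finite_ncard_le.1 hNen
    refine ⟨hfin, ?_⟩
    have hEq : N.encard = (N.ncard : ℕ∞) := (Set.Finite.encard_eq_coe_toFinset_card hfin).trans
      (by rw [Set.ncard_eq_toFinset_card N hfin])
    rw [hEq] at hchain
    exact_mod_cast hchain
  obtain ⟨c, hc⟩ := countable_coloring hn Λ (discrete_countable hΛ) Bad hsymm hirr H hdeg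
  refine ⟨fun i => {lam ∈ Λ | c lam = i}, ?_, ?_⟩
  · ext lam
    simp only [Set.mem_iUnion, Set.mem_setOf_eq]
    exact ⟨fun h => ⟨c lam, h, rfl⟩, fun ⟨i, h, _⟩ => h⟩
  · intro i
    refine ⟨fun z => H z + Real.log 2, harPos_add_const hH (Real.log_nonneg one_le_two), ?_⟩
    rintro lam ⟨hlamΛ, hlami⟩ mu ⟨hmuΛ, hmui⟩ hne
    have hnotbad : ¬ Bad lam mu := by
      intro hb
      exact hc lam hlamΛ mu hmuΛ hb (hlami.trans hmui.symm)
    have hsep : max (Real.exp (-H lam)) (Real.exp (-H mu)) ≤ pDist lam mu := by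
      by_contra hcon
      exact hnotbad ⟨hne, not_le.1 hcon⟩
    have hexp : ∀ z : ℂ, Real.exp (-(H z + Real.log 2)) = Real.exp (-H z) / 2 := by
      intro z
      have h2 : Real.exp (-Real.log 2) = 1/2 := by
        rw [Real.exp_neg, Real.exp_log (by norm_num : (0:ℝ) < 2)]
        norm_num
      rw [neg_add, Real.exp_add, h2]
      ring
    rw [Set.disjoint_left]
    rintro w ⟨hwD, hw1⟩ ⟨hwD', hw2⟩
    rw [hexp] at hw1 hw2
    have htri : pDist lam mu ≤ pDist lam w + pDist w mu :=
      pDist_triangle (hΛsub hlamΛ) hwD (hΛsub hmuΛ)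
    rw [pDist_symm w mu] at htri
    have hmax : Real.exp (-H lam) / 2 + Real.exp (-H mu) / 2
        ≤ max (Real.exp (-H lam)) (Real.exp (-H mu)) := by
      have h1 := le_max_left (Real.exp (-H lam)) (Real.exp (-H mu))
      have h2 := le_max_right (Real.exp (-H lam)) (Real.exp (-H mu))
      linarith
    linarith
end
end
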